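/- arXiv:1404.3391 — 8 statements merged into one kernel-verified Lean document; each statement's English description precedes it below -/
import Mathlib

section
/- Let k ≥ 1 and n ≥ 1, and let A = (a_{i,j}) be a k×n Boolean matrix, with rows indexed by i ∈ {0,...,k-1} and columns indexed by j ∈ {0,...,n-1}. Then there exists a permutation π of {0,...,n-1} such that for every i ∈ {0,...,k-1}, the i-th row of the matrix A^π (defined by a^π_{i,j} = a_{i,π(j)}) is composed of at most 2^i + 1 runs; moreover, if the i-th row of A^π is composed of exactly 2^i + 1 runs, then its first run is a run of 0s. -/
/-- The number of runs (maximal blocks of consecutive equal bits) of a binary string,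
viewed as a list of booleans. For a nonempty string it equals 1 plus the number of
adjacent mismatching positions; the empty string has 0 runs. -/
def runCount (l : List Bool) : ℕ :=
  if l.isEmpty then 0 else 1 + (l.zip l.tail).countP fun p => p.1 != p.2

namespace Stmt0Aux

/-- Recursive run count. -/
def rc : List Bool → ℕ
  | [] => 0
  | [_] => 1
  | a :: b :: t => (if a = b then 0 else 1) + rc (b :: t)

lemma runCount_eq_rc : ∀ l : List Bool, runCount l = rc l
  | [] => rfl
  | [_] => by simp [runCount, rc]
  | a :: b :: t => by
    have ih := runCount_eq_rc (b :: t)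
    simp only [runCount, rc, List.isEmpty_cons, List.tail_cons, List.zip_cons_cons,
      List.countP_cons] at *
    cases a <;> cases b <;> simp at * <;> omega

lemma one_le_rc : ∀ {l : List Bool}, l ≠ [] → 1 ≤ rc l
  | [_], _ => le_refl 1
  | a :: b :: t, _ => by
    have := one_le_rc (l := b :: t) (by simp)
    show 1 ≤ (if a = b then 0 else 1) + rc (b :: t)
    omega

lemma rc_cons_eq (a : Bool) {l : List Bool} (h : l ≠ []) :
    rc (a :: l) = (if a = l.head! then 0 else 1) + rc l := by
  match l with
  | b :: t => rfl

lemma dsym (a b : Bool) : (if a = b then (0:ℕ) else 1) = (if b = a then 0 else 1) := by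
  cases a <;> cases b <;> simp

lemma tri : ∀ a b c : Bool,
    (if a = c then (0:ℕ) else 1) ≤ (if a = b then 0 else 1) + (if b = c then 0 else 1) := by
  decide

lemma rc_sublist : ∀ {l₁ l₂ : List Bool}, List.Sublist l₁ l₂ → l₁ ≠ [] →
    rc l₁ + (if l₁.head! = l₂.head! then 0 else 1) ≤ rc l₂ := by
  intro l₁ l₂ h
  induction h with
  | slnil => intro h1; simp at h1
  | @cons l₁ l₂ a h ih =>
    intro h1
    have h2 : l₂ ≠ [] := by
      rintro rfl
      exact h1 (List.sublist_nil.1 h)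
    have key := ih h1
    have e2 : rc (a :: l₂) = (if a = l₂.head! then 0 else 1) + rc l₂ := rc_cons_eq a h2
    have hh : (a :: l₂).head! = a := rfl
    rw [hh, e2]
    have t1 := tri l₁.head! l₂.head! a
    have s1 := dsym l₂.head! a
    omega
  | @cons_cons l₁ l₂ a h ih =>
    intro _
    have : (a :: l₁).head! = (a :: l₂).head! := by simp
    rw [this, if_pos rfl, Nat.add_zero]
    rcases eq_or_ne l₁ [] with rfl | h1'
    · have : rc [a] = 1 := rfl
      rw [this]
      exact one_le_rc (by simp)
    · have h2 : l₂ ≠ [] := by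
        rintro rfl
        exact h1' (List.sublist_nil.1 h)
      have key := ih h1'
      rw [rc_cons_eq a h1', rc_cons_eq a h2]
      have t1 := tri a l₂.head! l₁.head!
      have s1 := dsym l₂.head! l₁.head!
      omega

lemma rc_le_of_sublist {l₁ l₂ : List Bool} (h : List.Sublist l₁ l₂) : rc l₁ ≤ rc l₂ := by
  rcases eq_or_ne l₁ [] with rfl | h1
  · simp [rc]
  · have := rc_sublist h h1
    omega

lemma getLast!_cons_cons (a b : Bool) (t : List Bool) :
    (a :: b :: t).getLast! = (b :: t).getLast! := by
  rw [List.getLast!_cons_eq_getLastD, List.getLast!_cons_eq_getLastD]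
  cases t with
  | nil => rfl
  | cons c s =>
    rw [List.getLastD_eq_getLast?, List.getLastD_eq_getLast?,
      List.getLast?_eq_getLast (l := c :: s) (by simp)]
    rfl

lemma head!_append {l₁ l₂ : List Bool} (h : l₁ ≠ []) : (l₁ ++ l₂).head! = l₁.head! := by
  match l₁, h with
  | a :: t, _ => rfl

lemma getLast!_append {l₁ l₂ : List Bool} (h : l₂ ≠ []) :
    (l₁ ++ l₂).getLast! = l₂.getLast! := by
  induction l₁ with
  | nil => rfl
  | cons a t ih =>
    cases t with
    | nil =>
      match l₂, h with
      | b :: s, _ => exact getLast!_cons_cons a b s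
    | cons b s =>
      have e : (a :: b :: s) ++ l₂ = a :: b :: (s ++ l₂) := rfl
      rw [e, getLast!_cons_cons]
      exact ih

lemma rc_append : ∀ (l₁ l₂ : List Bool), l₁ ≠ [] → l₂ ≠ [] →
    rc (l₁ ++ l₂) + 1 = rc l₁ + rc l₂ + (if l₁.getLast! = l₂.head! then 0 else 1) := by
  intro l₁
  induction l₁ with
  | nil => intro l₂ h; simp at h
  | cons a t ih =>
    intro l₂ _ h2
    cases t with
    | nil =>
      have : [a].getLast! = a := rfl
      rw [this]
      have : ([a] ++ l₂) = a :: l₂ := rfl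
      rw [this, rc_cons_eq a h2]
      have : rc [a] = 1 := rfl
      rw [this]
      omega
    | cons b s =>
      have e1 : (a :: b :: s) ++ l₂ = a :: ((b :: s) ++ l₂) := rfl
      rw [e1, rc_cons_eq a (by simp)]
      have hb : ((b :: s) ++ l₂).head! = b := rfl
      rw [hb]
      have ihh := ih l₂ (by simp) h2
      rw [getLast!_cons_cons]
      have e2 : rc (a :: b :: s) = (if a = b then 0 else 1) + rc (b :: s) := rfl
      rw [e2]
      omega

lemma head!_replicate (b : Bool) {m : ℕ} (h : m ≠ 0) : (List.replicate m b).head! = b := by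
  cases m with
  | zero => simp at h
  | succ p => rfl

lemma rc_replicate (b : Bool) : ∀ {m : ℕ}, m ≠ 0 → rc (List.replicate m b) = 1 := by
  intro m
  induction m with
  | zero => intro h; simp at h
  | succ p ih =>
    intro _
    cases p with
    | zero => rfl
    | succ q =>
      have e : List.replicate (q + 1 + 1) b = b :: List.replicate (q + 1) b := rfl
      rw [e, rc_cons_eq b (by simp), ih (by omega), head!_replicate b (by omega)]
      simp

lemma getLast!_replicate (b : Bool) : ∀ {m : ℕ}, m ≠ 0 → (List.replicate m b).getLast! = b := by
  intro m
  induction m with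
  | zero => intro h; simp at h
  | succ p ih =>
    intro _
    cases p with
    | zero => rfl
    | succ q =>
      have : List.replicate (q + 1 + 1) b = b :: b :: List.replicate q b := rfl
      rw [this, getLast!_cons_cons]
      exact ih (by omega)

/-- Remove adjacent duplicates. -/
def ddp : List ℕ → List ℕ
  | [] => []
  | [a] => [a]
  | a :: b :: t => if a = b then ddp (b :: t) else a :: ddp (b :: t)

lemma ddp_ne_nil : ∀ {l : List ℕ}, l ≠ [] → ddp l ≠ []
  | [a], _ => by simp [ddp]
  | a :: b :: t, _ => by
    have := ddp_ne_nil (l := b :: t) (by simp)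
    by_cases h : a = b <;> simp [ddp, h, this]

lemma head!_ddp : ∀ {l : List ℕ}, l ≠ [] → (ddp l).head! = l.head!
  | [a], _ => rfl
  | a :: b :: t, _ => by
    by_cases h : a = b
    · have := head!_ddp (l := b :: t) (by simp)
      simp [ddp, h, this]
    · simp [ddp, h]

lemma mem_ddp : ∀ {l : List ℕ} {x : ℕ}, x ∈ ddp l → x ∈ l
  | [a], x, h => by simpa [ddp] using h
  | a :: b :: t, x, h => by
    by_cases hab : a = b
    · simp only [ddp, if_pos hab] at h
      have := mem_ddp h
      simp [this]
    · simp only [ddp, if_neg hab, List.mem_cons] at h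
      rcases h with rfl | h
      · simp
      · have := mem_ddp h
        simp [this]

lemma chain'_lt_ddp : ∀ {l : List ℕ}, List.Chain' (· ≤ ·) l → List.Chain' (· < ·) (ddp l)
  | [], _ => by exact List.isChain_nil
  | [a], _ => by exact List.isChain_singleton a
  | a :: b :: t, h => by
    replace h := List.isChain_cons_cons.1 h
    have ih := chain'_lt_ddp h.2
    by_cases hab : a = b
    · simpa [ddp, hab] using ih
    · simp only [ddp, if_neg hab]
      have hne := ddp_ne_nil (l := b :: t) (by simp)
      match hd : ddp (b :: t), hne with
      | c :: s, _ =>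
        show List.IsChain _ _
        rw [List.isChain_cons_cons]
        constructor
        · have : c = (ddp (b :: t)).head! := by rw [hd]; rfl
          rw [this, head!_ddp (by simp)]
          have : (b :: t).head! = b := rfl
          rw [this]
          omega
        · rw [← hd]; exact ih

lemma rc_map_ddp (g : ℕ → Bool) : ∀ (l : List ℕ), rc ((ddp l).map g) = rc (l.map g)
  | [] => rfl
  | [a] => rfl
  | a :: b :: t => by
    have ih := rc_map_ddp g (b :: t)
    by_cases hab : a = b
    · simp only [ddp, if_pos hab, ih, List.map_cons]
      have : rc (g a :: g b :: (t.map g)) = (if g a = g b then 0 else 1) + rc (g b :: t.map g) := rfl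
      rw [this, hab, if_pos rfl, Nat.zero_add]
    · simp only [ddp, if_neg hab, List.map_cons]
      have hne : (ddp (b :: t)).map g ≠ [] := by
        simp [ddp_ne_nil (l := b :: t) (by simp)]
      rw [rc_cons_eq _ hne, ih]
      have hh : ((ddp (b :: t)).map g).head! = g ((ddp (b :: t)).head!) := by
        match hd : ddp (b :: t), ddp_ne_nil (l := b :: t) (by simp) with
        | c :: s, _ => rfl
      rw [hh, head!_ddp (by simp)]
      have : (b :: t).head! = b := rfl
      rw [this]
      rfl

lemma sublist_range {N : ℕ} {l : List ℕ} (h : List.Chain' (· < ·) l)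
    (hb : ∀ x ∈ l, x < N) : List.Sublist l (List.range N) := by
  classical
  have hp : l.Pairwise (· < ·) := List.isChain_iff_pairwise.1 h
  have hnd : l.Nodup := hp.imp ne_of_lt
  have key : l = (List.range N).filter (fun x => decide (x ∈ l)) := by
    apply List.Perm.eq_of_pairwise (fun a b _ _ h1 h2 => absurd (lt_trans h1 h2) (lt_irrefl a)) hp (List.pairwise_lt_range.filter _) ?_
    refine (List.perm_ext_iff_of_nodup hnd ((List.nodup_range (n := N)).filter _)).2 fun a => ?_
    simp only [List.mem_filter, List.mem_range, decide_eq_true_eq]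
    exact ⟨fun ha => ⟨hb a ha, ha⟩, fun h => h.2⟩
  rw [key]
  exact List.filter_sublist

/-! ### The Gray-code bit pattern -/

/-- Bit `p` of the Gray code of `m`. -/
def g2 (p m : ℕ) : Bool := decide (m / 2 ^ p % 2 = 1) != decide (m / 2 ^ (p + 1) % 2 = 1)

def pat (p q : ℕ) : List Bool := (List.range (2 ^ q)).map (g2 p)

lemma eq_replicate_map_range {f : ℕ → Bool} {N : ℕ} {b : Bool} (h : ∀ m < N, f m = b) :
    (List.range N).map f = List.replicate N b := by
  refine List.eq_replicate_iff.2 ⟨by simp, ?_⟩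
  intro c hc
  simp only [List.mem_map, List.mem_range] at hc
  obtain ⟨m, hm, rfl⟩ := hc
  exact h m hm

lemma g2_of_lt {p m : ℕ} (h : m < 2 ^ p) : g2 p m = false := by
  have h1 : m / 2 ^ p = 0 := Nat.div_eq_of_lt h
  have h2 : m / 2 ^ (p + 1) = 0 := Nat.div_eq_of_lt (lt_of_lt_of_le h (by
    exact Nat.pow_le_pow_right (by norm_num) (by omega)))
  simp [g2, h1, h2]

lemma div_pow_eq_one {p m : ℕ} (h1 : 2 ^ p ≤ m) (h2 : m < 2 ^ (p + 1)) : m / 2 ^ p = 1 := by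
  have hp : 0 < 2 ^ p := Nat.pow_pos (n := p) (by norm_num)
  have : m = (m - 2 ^ p) + 2 ^ p * 1 := by omega
  rw [this, Nat.add_mul_div_left _ _ hp]
  have : (m - 2 ^ p) / 2 ^ p = 0 := Nat.div_eq_of_lt (by
    have : 2 ^ (p + 1) = 2 ^ p + 2 ^ p := by rw [pow_succ]; omega
    omega)
  omega

lemma g2_of_snd {p m : ℕ} (h : m < 2 ^ (p + 1)) : g2 p m = decide (2 ^ p ≤ m) := by
  have h2 : m / 2 ^ (p + 1) = 0 := Nat.div_eq_of_lt h
  by_cases hle : 2 ^ p ≤ m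
  · have := div_pow_eq_one hle h
    simp [g2, this, h2, hle]
  · have : m / 2 ^ p = 0 := Nat.div_eq_of_lt (by omega)
    simp [g2, this, h2, hle]

lemma div_two_pow_add {p q m : ℕ} (h : p ≤ q) :
    (2 ^ q + m) / 2 ^ p = 2 ^ (q - p) + m / 2 ^ p := by
  have hp : 0 < 2 ^ p := Nat.pow_pos (n := p) (by norm_num)
  have e : (2:ℕ) ^ q = 2 ^ p * 2 ^ (q - p) := by
    rw [← pow_add]
    congr 1
    omega
  rw [e, Nat.add_comm, Nat.add_mul_div_left _ _ hp, Nat.add_comm]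

lemma g2_add_pow {p q m : ℕ} (h : p + 2 ≤ q) : g2 p (2 ^ q + m) = g2 p m := by
  have e1 : (2 ^ q + m) / 2 ^ p = 2 ^ (q - p) + m / 2 ^ p := div_two_pow_add (by omega)
  have e2 : (2 ^ q + m) / 2 ^ (p + 1) = 2 ^ (q - (p + 1)) + m / 2 ^ (p + 1) :=
    div_two_pow_add (by omega)
  have o1 : 2 ^ (q - p) % 2 = 0 := by
    have : q - p = (q - p - 1) + 1 := by omega
    rw [this, pow_succ]
    omega
  have o2 : 2 ^ (q - (p + 1)) % 2 = 0 := by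
    have : q - (p + 1) = (q - (p + 1) - 1) + 1 := by omega
    rw [this, pow_succ]
    omega
  simp only [g2, e1, e2]
  have m1 : (2 ^ (q - p) + m / 2 ^ p) % 2 = m / 2 ^ p % 2 := by omega
  have m2 : (2 ^ (q - (p + 1)) + m / 2 ^ (p + 1)) % 2 = m / 2 ^ (p + 1) % 2 := by omega
  rw [m1, m2]

lemma g2_reflect {p m : ℕ} (h : m < 2 ^ (p + 1)) :
    g2 p (2 ^ (p + 1) + m) = !(decide (2 ^ p ≤ m)) := by
  have hp : 0 < 2 ^ p := Nat.pow_pos (n := p) (by norm_num)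
  have e1 : (2 ^ (p + 1) + m) / 2 ^ p = 2 + m / 2 ^ p := by
    have := div_two_pow_add (p := p) (q := p + 1) (m := m) (by omega)
    simpa using this
  have e2 : (2 ^ (p + 1) + m) / 2 ^ (p + 1) = 1 := by
    have := div_two_pow_add (p := p + 1) (q := p + 1) (m := m) (le_refl _)
    rw [this, Nat.sub_self, pow_zero, Nat.div_eq_of_lt h]
  by_cases hle : 2 ^ p ≤ m
  · have : m / 2 ^ p = 1 := div_pow_eq_one hle h
    simp [g2, e1, e2, this, hle]
  · have : m / 2 ^ p = 0 := Nat.div_eq_of_lt (by omega)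
    simp [g2, e1, e2, this, hle]

lemma pat_base1 (p : ℕ) :
    pat p (p + 1) = List.replicate (2 ^ p) false ++ List.replicate (2 ^ p) true := by
  have h : 2 ^ (p + 1) = 2 ^ p + 2 ^ p := by rw [pow_succ]; omega
  rw [pat, h, List.range_add, List.map_append, List.map_map]
  congr 1
  · exact eq_replicate_map_range fun m hm => g2_of_lt hm
  · apply eq_replicate_map_range
    intro m hm
    show g2 p (2 ^ p + m) = true
    rw [g2_of_snd (by omega)]
    simp

lemma pat_base2 (p : ℕ) :
    pat p (p + 2) = (List.replicate (2 ^ p) false ++ List.replicate (2 ^ (p + 1)) true)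
      ++ List.replicate (2 ^ p) false := by
  have h : 2 ^ (p + 2) = 2 ^ (p + 1) + 2 ^ (p + 1) := by rw [pow_succ 2 (p+1)]; omega
  have h1 : 2 ^ (p + 1) = 2 ^ p + 2 ^ p := by rw [pow_succ]; omega
  rw [pat, h, List.range_add, List.map_append, List.map_map]
  have e2 : (List.range (2 ^ (p + 1))).map (g2 p ∘ (2 ^ (p + 1) + ·)) =
      List.replicate (2 ^ p) true ++ List.replicate (2 ^ p) false := by
    rw [h1, List.range_add, List.map_append, List.map_map]
    congr 1
    · apply eq_replicate_map_range
      intro m hm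
      show g2 p (2 ^ p + 2 ^ p + m) = true
      have e : 2 ^ p + 2 ^ p + m = 2 ^ (p + 1) + m := by omega
      rw [e, g2_reflect (by omega)]
      simp [Nat.not_le.2 hm]
    · apply eq_replicate_map_range
      intro m hm
      show g2 p (2 ^ p + 2 ^ p + (2 ^ p + m)) = false
      have e : 2 ^ p + 2 ^ p + (2 ^ p + m) = 2 ^ (p + 1) + (2 ^ p + m) := by omega
      rw [e, g2_reflect (by omega)]
      simp
  rw [← pat, pat_base1, e2, h1, List.replicate_add]
  simp only [List.append_assoc]

lemma pat_double {p q : ℕ} (h : p + 2 ≤ q) : pat p (q + 1) = pat p q ++ pat p q := by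
  have hq : 2 ^ (q + 1) = 2 ^ q + 2 ^ q := by rw [pow_succ]; omega
  rw [pat, hq, List.range_add, List.map_append, List.map_map]
  congr 1
  apply List.map_congr_left
  intro m hm
  exact g2_add_pow h

lemma pat_ne_nil (p q : ℕ) : pat p q ≠ [] := by
  simp only [pat, ne_eq, List.map_eq_nil_iff, List.range_eq_nil]
  positivity

lemma head!_pat (p q : ℕ) : (pat p q).head! = false := by
  have h : ∃ s, 2 ^ q = s + 1 := ⟨2 ^ q - 1, by have := Nat.pow_pos (n := q) (show 0 < 2 by norm_num); omega⟩
  obtain ⟨s, hs⟩ := h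
  rw [pat, hs, List.range_succ_eq_map]
  simp only [List.map_cons, List.head!]
  exact g2_of_lt (Nat.pow_pos (n := p) (by norm_num))

lemma rc_pat (p : ℕ) : ∀ i : ℕ, rc (pat p (p + 1 + i)) ≤ 2 ^ i + 1 ∧
    (1 ≤ i → (pat p (p + 1 + i)).getLast! = false) := by
  have hpow : (0:ℕ) < 2 ^ p := Nat.pow_pos (n := p) (by norm_num)
  intro i
  induction i with
  | zero =>
    refine ⟨?_, by omega⟩
    rw [pat_base1]
    have h2 := rc_append (List.replicate (2 ^ p) false) (List.replicate (2 ^ p) true)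
      (by simp) (by simp)
    rw [rc_replicate _ (by omega), rc_replicate _ (by omega),
      getLast!_replicate _ (by omega), head!_replicate _ (by omega),
      if_neg (by simp)] at h2
    simp only [pow_zero]
    omega
  | succ i ih =>
    cases i with
    | zero =>
      have e : p + 1 + 1 = p + 2 := by omega
      rw [e, pat_base2]
      have hpow1 : (0:ℕ) < 2 ^ (p + 1) := Nat.pow_pos (by norm_num)
      have h1 := rc_append (List.replicate (2 ^ p) false) (List.replicate (2 ^ (p + 1)) true)
        (by simp) (by simp)
      rw [rc_replicate _ (by omega), rc_replicate _ (by omega),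
        getLast!_replicate _ (by omega), head!_replicate _ (by omega),
        if_neg (by simp)] at h1
      have h2 := rc_append (List.replicate (2 ^ p) false ++ List.replicate (2 ^ (p + 1)) true)
        (List.replicate (2 ^ p) false) (by simp) (by simp)
      rw [rc_replicate _ (by omega), getLast!_append (l₁ := List.replicate (2 ^ p) false)
        (by simp), getLast!_replicate _ (by omega), head!_replicate _ (by omega),
        if_neg (by simp)] at h2
      constructor
      · have hx : (2:ℕ) ^ (0 + 1) + 1 = 3 := by norm_num
        rw [hx]
        omega
      · intro _
        rw [getLast!_append (by simp), getLast!_replicate _ (by omega)]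
    | succ j =>
      have hj := ih
      have e : p + 1 + (j + 1 + 1) = (p + 1 + (j + 1)) + 1 := by omega
      rw [e, pat_double (by omega)]
      have hne := pat_ne_nil p (p + 1 + (j + 1))
      have hlast : (pat p (p + 1 + (j + 1))).getLast! = false := hj.2 (by omega)
      have hhead : (pat p (p + 1 + (j + 1))).head! = false := head!_pat _ _
      have happ := rc_append (pat p (p + 1 + (j + 1))) (pat p (p + 1 + (j + 1))) hne hne
      rw [hlast, hhead, if_pos rfl] at happ
      constructor
      · have hb := hj.1
        have : (2:ℕ) ^ (j + 1 + 1) = 2 ^ (j + 1) + 2 ^ (j + 1) := by rw [pow_succ]; omega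
        omega
      · intro _
        rw [getLast!_append hne, hlast]

/-! ### Column values -/

/-- prefix xor -/
def pxor (c : ℕ → Bool) : ℕ → Bool
  | 0 => c 0
  | t + 1 => xor (pxor c t) (c (t + 1))

/-- binary value with b 0 the most significant bit -/
def wv (b : ℕ → Bool) : ℕ → ℕ
  | 0 => 0
  | r + 1 => 2 * wv b r + (b r).toNat

lemma wv_lt (b : ℕ → Bool) : ∀ r, wv b r < 2 ^ r
  | 0 => by simp [wv]
  | r + 1 => by
    have := wv_lt b r
    have : 2 ^ (r + 1) = 2 ^ r + 2 ^ r := by rw [pow_succ]; omega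
    cases h : b r <;> simp [wv, h] <;> omega

lemma wv_div (b : ℕ → Bool) (r : ℕ) : ∀ s, wv b (r + s) / 2 ^ s = wv b r := by
  intro s
  induction s with
  | zero => simp
  | succ s ih =>
    have e : r + (s + 1) = (r + s) + 1 := by omega
    rw [e]
    show (2 * wv b (r + s) + (b (r + s)).toNat) / 2 ^ (s + 1) = wv b r
    have e2 : (2:ℕ) ^ (s + 1) = 2 * 2 ^ s := by rw [pow_succ]; ring
    rw [e2, ← Nat.div_div_eq_div_mul]
    have : (2 * wv b (r + s) + (b (r + s)).toNat) / 2 = wv b (r + s) := by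
      cases h : b (r + s) <;> simp [h] <;> omega
    rw [this, ih]

end Stmt0Aux

open Stmt0Aux in
theorem stmt0 (k n : ℕ) (hk : 1 ≤ k) (hn : 1 ≤ n)
    (A : Fin k → Fin n → Bool) :
    ∃ π : Equiv.Perm (Fin n),
      ∀ i : Fin k,
        runCount (List.ofFn fun j => A i (π j)) ≤ 2 ^ (i : ℕ) + 1 ∧
        (runCount (List.ofFn fun j => A i (π j)) = 2 ^ (i : ℕ) + 1 →
          A i (π ⟨0, hn⟩) = false) := by
  classical
  -- the column bit functions
  set Ab : Fin n → ℕ → Bool := fun j t => if h : t < k then A ⟨t, h⟩ j else false with hAb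
  set val : Fin n → ℕ := fun j => wv (pxor (Ab j)) k with hval
  -- key: A i j = g2 (k-1-i) (val j)
  have key : ∀ (i : Fin k) (j : Fin n), A i j = g2 (k - 1 - (i : ℕ)) (val j) := by
    intro i j
    have hik : (i : ℕ) < k := i.is_lt
    set b : ℕ → Bool := pxor (Ab j) with hb
    have hb1 : val j / 2 ^ (k - 1 - (i : ℕ)) % 2 = (b (i : ℕ)).toNat := by
      have e : wv b k = wv b (((i : ℕ) + 1) + (k - 1 - (i : ℕ))) := by congr 1; omega
      show wv b k / 2 ^ (k - 1 - (i : ℕ)) % 2 = _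
      rw [e, wv_div]
      show (2 * wv b (i : ℕ) + (b (i : ℕ)).toNat) % 2 = _
      cases h : b (i : ℕ) <;> simp [h] <;> omega
    have hb2 : val j / 2 ^ (k - 1 - (i : ℕ) + 1) % 2 =
        (if (i : ℕ) = 0 then false else b ((i : ℕ) - 1)).toNat := by
      by_cases h0 : (i : ℕ) = 0
      · have e : k - 1 - (i : ℕ) + 1 = k := by omega
        rw [e]
        show wv b k / 2 ^ k % 2 = _
        rw [Nat.div_eq_of_lt (wv_lt b k)]
        simp [h0]
      · have e : wv b k = wv b ((i : ℕ) + (k - 1 - (i : ℕ) + 1)) := by congr 1; omega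
        show wv b k / 2 ^ (k - 1 - (i : ℕ) + 1) % 2 = _
        rw [e, wv_div]
        have e2 : wv b (i : ℕ) = wv b (((i : ℕ) - 1) + 1) := by congr 1; omega
        rw [e2]
        show (2 * wv b ((i : ℕ) - 1) + (b ((i : ℕ) - 1)).toNat) % 2 = _
        rw [if_neg h0]
        cases h : b ((i : ℕ) - 1) <;> simp [h] <;> omega
    simp only [g2]
    rw [hb1, hb2]
    by_cases h0 : (i : ℕ) = 0
    · rw [if_pos h0]
      have e : b (i : ℕ) = A i j := by
        rw [hb, h0]
        show (if h : (0 : ℕ) < k then A ⟨0, h⟩ j else false) = A i j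
        rw [dif_pos (show (0 : ℕ) < k by omega)]
        have hi : i = (⟨0, by omega⟩ : Fin k) := Fin.ext (by simp [h0])
        rw [hi]
      rw [e]
      cases h : A i j <;> simp [h]
    · rw [if_neg h0]
      have e : b (i : ℕ) = xor (b ((i : ℕ) - 1)) (A i j) := by
        have e2 : b (i : ℕ) = b (((i : ℕ) - 1) + 1) := by congr 1; omega
        rw [e2, hb]
        show xor (pxor (Ab j) ((i : ℕ) - 1)) (Ab j (((i : ℕ) - 1) + 1)) = _
        congr 1
        show (if h : ((i : ℕ) - 1) + 1 < k then A ⟨((i : ℕ) - 1) + 1, h⟩ j else false) = A i j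
        rw [dif_pos (show ((i : ℕ) - 1) + 1 < k by omega)]
        have hi : i = (⟨((i : ℕ) - 1) + 1, by omega⟩ : Fin k) := Fin.ext (by simp; omega)
        conv_rhs => rw [hi]
      rw [e]
      cases h : A i j <;> cases h2 : b ((i : ℕ) - 1) <;> simp [h, h2]
  -- sort the columns
  refine ⟨Tuple.sort val, fun i => ?_⟩
  set π := Tuple.sort val with hπ
  have hmono : Monotone (val ∘ π) := Tuple.monotone_sort val
  set p := k - 1 - (i : ℕ) with hp
  have hik : (i : ℕ) < k := i.is_lt
  have hkeq : p + 1 + (i : ℕ) = k := by omega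
  set vs : List ℕ := List.ofFn (val ∘ π) with hvs
  have hrow : (List.ofFn fun j => A i (π j)) = vs.map (g2 p) := by
    rw [hvs, List.map_ofFn]
    congr 1
    funext j
    exact key i (π j)
  have hvs_ne : vs ≠ [] := by
    rw [hvs]
    intro h
    have := congrArg List.length h
    simp at this
    omega
  have hchain : List.Chain' (· ≤ ·) vs := by
    rw [hvs]
    show List.IsChain _ _
    rw [List.isChain_iff_pairwise]
    rw [List.pairwise_ofFn]
    intro a b hab
    exact hmono (le_of_lt hab)
  set dd := ddp vs with hdd
  have hdd_ne : dd ≠ [] := ddp_ne_nil hvs_ne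
  have hdd_sub : List.Sublist dd (List.range (2 ^ k)) := by
    apply sublist_range (chain'_lt_ddp hchain)
    intro x hx
    have hx2 := mem_ddp hx
    rw [hvs] at hx2
    rw [List.mem_ofFn] at hx2
    obtain ⟨j, rfl⟩ := hx2
    exact wv_lt _ k
  have hmap_sub : List.Sublist (dd.map (g2 p)) (pat p k) := List.Sublist.map _ hdd_sub
  have hrc_eq : rc ((List.ofFn fun j => A i (π j))) = rc (dd.map (g2 p)) := by
    rw [hrow, hdd, rc_map_ddp]
  have hpat_bound : rc (pat p k) ≤ 2 ^ (i : ℕ) + 1 := by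
    have := (rc_pat p (i : ℕ)).1
    rwa [hkeq] at this
  have hmap_ne : dd.map (g2 p) ≠ [] := by simp [hdd_ne]
  have hsub := rc_sublist hmap_sub hmap_ne
  have hhead_pat : (pat p k).head! = false := head!_pat p k
  have hrun : runCount (List.ofFn fun j => A i (π j)) = rc (dd.map (g2 p)) := by
    rw [runCount_eq_rc, hrc_eq]
  constructor
  · rw [hrun]
    have := rc_le_of_sublist hmap_sub
    omega
  · intro heq
    rw [hrun] at heq
    have hδ : (dd.map (g2 p)).head! = (pat p k).head! := by
      by_contra hne
      rw [if_neg hne] at hsub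
      omega
    rw [hhead_pat] at hδ
    -- head! (dd.map (g2 p)) = g2 p (val (π ⟨0, hn⟩))
    have hh1 : (dd.map (g2 p)).head! = g2 p dd.head! := by
      match hd : dd, hdd_ne with
      | c :: s, _ => rfl
    have hh2 : dd.head! = vs.head! := head!_ddp hvs_ne
    have hh3 : vs.head! = val (π ⟨0, hn⟩) := by
      obtain ⟨m, rfl⟩ : ∃ m, n = m + 1 := ⟨n - 1, by omega⟩
      rw [hvs, List.ofFn_succ]
      rfl
    rw [hh1, hh2, hh3] at hδ
    rw [key i (π ⟨0, hn⟩)]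
    exact hδ
end

section
/- Let n ≥ 2 and 1 ≤ k ≤ log₂ n (i.e., 2^k ≤ n), and for i ∈ {0,...,k-1} set ℓ_i = ⌈log₂(2·∑_{j=0}^{2^i} C(n-k-1, j))⌉. Then there exists a decoding function D : {0,...,k-1} × {0,1}* × {0,...,n-k-1} → {0,1} such that for every k×(n-k) Boolean matrix A = (a_{i,j}) there exist a permutation π of {0,...,n-k-1} and binary strings w_0, ..., w_{k-1}, where w_i has length exactly ℓ_i, satisfying D(i, w_i, j) = a_{i, π(j)} for all i ∈ {0,...,k-1} and j ∈ {0,...,n-k-1}. (In other words, every (k, n-k)-bipartite graph can be encoded by permuting the right-side vertices and assigning the i-th left vertex an ℓ_i-bit tag, so that adjacency is determined from the left vertex's index and tag together with the right vertex's index alone.) -/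
open Finset

namespace Stmt2Aux

/-- number of value-changes of `f` on gaps in `[a,b)` -/
def cnt (f : ℕ → Bool) (a b : ℕ) : ℕ :=
  ((Finset.Ico a b).filter (fun t => f t ≠ f (t+1))).card

lemma cnt_add (f : ℕ → Bool) {a b c : ℕ} (hab : a ≤ b) (hbc : b ≤ c) :
    cnt f a b + cnt f b c = cnt f a c := by
  unfold cnt
  rw [← Finset.card_union_of_disjoint, ← Finset.filter_union,
    Finset.Ico_union_Ico_eq_Ico hab hbc]
  exact Finset.disjoint_filter_filter (Finset.Ico_disjoint_Ico_consecutive a b c)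

lemma cnt_pos (f : ℕ → Bool) {a b : ℕ} (hab : a ≤ b) (hf : f a ≠ f b) :
    1 ≤ cnt f a b := by
  induction b with
  | zero =>
    interval_cases a
    · simp at hf
  | succ b ih =>
    rcases Nat.lt_or_ge a (b+1) with h | h
    · have hab' : a ≤ b := by omega
      by_cases hfb : f b = f (b+1)
      · have h1 : 1 ≤ cnt f a b := ih hab' (by rw [hfb]; exact hf)
        have h2 := cnt_add f hab' (show b ≤ b + 1 by omega)
        omega
      · have hm : b ∈ (Finset.Ico a (b+1)).filter (fun t => f t ≠ f (t+1)) := by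
          simp [Finset.mem_Ico]; exact ⟨hab', hfb⟩
        have := Finset.card_pos.mpr ⟨b, hm⟩
        unfold cnt; omega
    · simp [show a = b + 1 by omega] at hf

lemma cnt_comp_monotone (f : ℕ → Bool) {s : ℕ → ℕ} (hs : Monotone s) (a : ℕ) :
    ∀ b, a ≤ b → cnt (fun t => f (s t)) a b ≤ cnt f (s a) (s b) := by
  intro b
  induction b with
  | zero => intro h; interval_cases a; simp [cnt]
  | succ b ih =>
    intro h
    rcases Nat.lt_or_ge a (b+1) with h' | h'
    · have hab : a ≤ b := by omega
      have h1 := ih hab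
      have h2 : cnt (fun t => f (s t)) b (b+1) ≤ cnt f (s b) (s (b+1)) := by
        by_cases hc : f (s b) = f (s (b+1))
        · have hz : cnt (fun t => f (s t)) b (b+1) = 0 := by
            unfold cnt
            rw [Finset.card_eq_zero, Finset.filter_eq_empty_iff]
            intro t ht
            simp only [Finset.mem_Ico] at ht
            have : t = b := by omega
            subst this; simp [hc]
          omega
        · calc cnt (fun t => f (s t)) b (b+1) ≤ 1 := by
                unfold cnt
                calc _ ≤ (Finset.Ico b (b+1)).card := Finset.card_filter_le _ _
                _ = 1 := by simp
             _ ≤ cnt f (s b) (s (b+1)) := cnt_pos f (hs (show b ≤ b+1 by omega)) hc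
      have h3 := cnt_add (fun t => f (s t)) hab (show b ≤ b+1 by omega)
      have h4 := cnt_add f (hs hab) (hs (show b ≤ b+1 by omega))
      omega
    · have : a = b + 1 := by omega
      subst this; simp [cnt]

lemma cnt_le_of_subinterval (f : ℕ → Bool) {a b c d : ℕ} (h1 : a ≤ b) (h2 : b ≤ c)
    (h3 : c ≤ d) : cnt f b c ≤ cnt f a d := by
  have e1 := cnt_add f h1 h2
  have e2 := cnt_add f (h1.trans h2) h3
  omega

/-- a sequence is determined on `[0,M]` by its value at `0` and its change set -/
lemma eq_of_changes_eq (f g : ℕ → Bool) (M : ℕ) (h0 : f 0 = g 0)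
    (hch : ∀ t < M, (f t ≠ f (t+1)) ↔ (g t ≠ g (t+1))) :
    ∀ t ≤ M, f t = g t := by
  intro t
  induction t with
  | zero => intro _; exact h0
  | succ t ih =>
    intro ht
    have h1 : f t = g t := ih (by omega)
    have h2 := hch t (by omega)
    by_cases hc : f t = f (t+1)
    · have hg : g t = g (t+1) := by
        by_contra hgc
        exact (h2.mpr hgc) hc
      rw [← hc, h1, hg]
    · have hg := h2.mp hc
      cases hft : f t <;> cases hft1 : f (t+1) <;> cases hgt1 : g (t+1) <;>
        simp_all


/-- prefix-xor (parity) of a column -/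
def par (c : ℕ → Bool) : ℕ → Bool
  | 0 => c 0
  | t+1 => xor (par c t) (c (t+1))

/-- Gray-code style rank of a column vector -/
def rnk (k : ℕ) (c : ℕ → Bool) : ℕ :=
  ∑ t ∈ Finset.range k, if par c t then 2^(k-1-t) else 0

/-- "bit i of the Gray code of r", we read it off via division -/
def g (k i r : ℕ) : Bool := decide (((r + 2^(k-1-i)) / 2^(k-i)) % 2 = 1)

lemma sum_pow_two (k : ℕ) : ∑ t ∈ Finset.range k, 2^t = 2^k - 1 := by
  induction k with
  | zero => simp
  | succ k ih =>
    rw [Finset.sum_range_succ, ih]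
    have : 1 ≤ 2^k := Nat.one_le_two_pow
    have : 2^(k+1) = 2 * 2^k := by ring
    omega

lemma rnk_lt (k : ℕ) (c : ℕ → Bool) : rnk k c < 2^k := by
  have h1 : rnk k c ≤ ∑ t ∈ Finset.range k, 2^(k-1-t) := by
    apply Finset.sum_le_sum
    intro t _
    split <;> simp
  rw [Finset.sum_range_reflect (fun t => 2^t) k] at h1
  rw [sum_pow_two] at h1
  have : 1 ≤ 2^k := Nat.one_le_two_pow
  omega

lemma g_rnk (k : ℕ) (c : ℕ → Bool) {i : ℕ} (hi : i < k) : g k i (rnk k c) = c i := by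
  set e := k - 1 - i with he
  have hke : k - i = e + 1 := by omega
  -- split the sum
  have hsplit : rnk k c
      = (∑ t ∈ Finset.range i, if par c t then 2^(k-1-t) else 0)
        + (if par c i then 2^e else 0)
        + (∑ t ∈ Finset.Ico (i+1) k, if par c t then 2^(k-1-t) else 0) := by
    unfold rnk
    rw [Finset.range_eq_Ico, ← Finset.sum_Ico_consecutive _ (Nat.zero_le (i+1)) hi,
      ← Finset.range_eq_Ico, Finset.sum_range_succ]
  set Hi := ∑ t ∈ Finset.range i, if par c t then 2^(k-1-t) else 0 with hHidef
  set Lo := ∑ t ∈ Finset.Ico (i+1) k, if par c t then 2^(k-1-t) else 0 with hLodef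
  set q := ∑ t ∈ Finset.range i, if par c t then 2^(i-1-t) else 0 with hqdef
  have hHi : Hi = 2^(e+1) * q := by
    rw [hHidef, hqdef, Finset.mul_sum]
    apply Finset.sum_congr rfl
    intro t ht
    simp only [Finset.mem_range] at ht
    split
    · rw [← pow_add]
      congr 1
      omega
    · simp
  have hLo : Lo ≤ 2^e - 1 := by
    have h1 : Lo ≤ ∑ t ∈ Finset.Ico (i+1) k, 2^(k-1-t) := by
      apply Finset.sum_le_sum; intro t _; split <;> simp
    have h2 : ∑ t ∈ Finset.Ico (i+1) k, 2^(k-1-t)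
        = ∑ j ∈ Finset.range e, 2^(e-1-j) := by
      rw [Finset.sum_Ico_eq_sum_range]
      apply Finset.sum_congr (by congr 1; omega)
      intro j hj
      simp only [Finset.mem_range] at hj
      congr 1
      omega
    rw [h2, Finset.sum_range_reflect (fun t => 2^t) e, sum_pow_two] at h1
    exact h1
  -- the division computation
  have hLo' : Lo < 2^e := by have : 1 ≤ 2^e := Nat.one_le_two_pow; omega
  have hdiv : (rnk k c + 2^e) / 2^(e+1) = q + (if par c i then 1 else 0) := by
    have h2e : 2^(e+1) = 2 * 2^e := by ring
    rw [hsplit, hHi]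
    have hrest : ((if par c i then 2^e else 0) + Lo + 2^e) / 2^(e+1)
        = (if par c i then 1 else 0) := by
      split
      · have heq : 2^e + Lo + 2^e = 2^(e+1) + Lo := by omega
        rw [heq, Nat.add_div_left _ (Nat.two_pow_pos _),
          Nat.div_eq_of_lt (by omega)]
      · rw [Nat.div_eq_of_lt (by omega)]
    calc (2^(e+1) * q + (if par c i then 2^e else 0) + Lo + 2^e) / 2^(e+1)
        = (((if par c i then 2^e else 0) + Lo + 2^e) + 2^(e+1) * q) / 2^(e+1) := by
          ring_nf
      _ = ((if par c i then 2^e else 0) + Lo + 2^e) / 2^(e+1) + q :=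
          Nat.add_mul_div_left _ _ (Nat.two_pow_pos _)
      _ = q + (if par c i then 1 else 0) := by rw [hrest]; ring
  have hg : g k i (rnk k c) = decide ((q + (if par c i then 1 else 0)) % 2 = 1) := by
    unfold g
    rw [← he, hke, hdiv]
  rcases Nat.eq_zero_or_pos i with h0 | h0
  · subst h0
    have hq0 : q = 0 := by simp [hqdef]
    rw [hg, hq0]
    have : par c 0 = c 0 := rfl
    rw [this]
    cases c 0 <;> simp
  · obtain ⟨i', rfl⟩ : ∃ i', i = i' + 1 := ⟨i - 1, by omega⟩
    have hq2 : q % 2 = if par c i' then 1 else 0 := by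
      rw [hqdef, Finset.sum_range_succ]
      have heven : 2 ∣ ∑ t ∈ Finset.range i', if par c t then 2^(i'+1-1-t) else 0 := by
        apply Finset.dvd_sum
        intro t ht
        simp only [Finset.mem_range] at ht
        split
        · exact dvd_pow_self 2 (by omega)
        · exact dvd_zero 2
      obtain ⟨d, hd⟩ := heven
      rw [hd]
      have : i' + 1 - 1 - i' = 0 := by omega
      rw [this, pow_zero]
      split <;> omega
    have hpar : par c (i'+1) = xor (par c i') (c (i'+1)) := rfl
    rw [hg, hpar, Nat.add_mod, hq2]
    cases hp : par c i' <;> cases hc : c (i'+1) <;> simp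

/-- a change of Gray bit `i` forces divisibility -/
lemma g_change (k i t : ℕ) (h : g k i t ≠ g k i (t+1)) :
    2^(k-i) ∣ (t + 1 + 2^(k-1-i)) := by
  by_contra hdvd
  apply h
  unfold g
  have : (t + 1 + 2^(k-1-i)) / 2^(k-i) = (t + 2^(k-1-i)) / 2^(k-i) := by
    have := Nat.succ_div (a := t + 2^(k-1-i)) (b := 2^(k-i))
    rw [show t + 2^(k-1-i) + 1 = t + 1 + 2^(k-1-i) by ring] at this
    rw [this, if_neg hdvd]
    ring
  rw [show t + 1 + 2^(k-1-i) = t + 2^(k-1-i) + 1 by ring] at this ⊢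
  rw [this]

/-- Gray bit `i` changes at most `2^i` times over the whole range -/
lemma cnt_g (k i : ℕ) (hi : i < k) : cnt (g k i) 0 (2^k) ≤ 2^i := by
  unfold cnt
  have hh : 2 * 2^(k-1-i) = 2^(k-i) := by
    rw [← pow_succ']
    congr 1
    omega
  have hpos : (1:ℕ) ≤ 2^(k-1-i) := Nat.one_le_two_pow
  have h2k : 2^k = 2^i * 2^(k-i) := by rw [← pow_add]; congr 1; omega
  have key : ∀ t < 2^k, g k i t ≠ g k i (t+1) →
      ∃ u, t + 1 + 2^(k-1-i) = 2^(k-i) * u ∧ 1 ≤ u ∧ u ≤ 2^i := by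
    intro t ht hch
    obtain ⟨u, hu⟩ := g_change k i t hch
    refine ⟨u, hu, ?_, ?_⟩
    · rcases Nat.eq_zero_or_pos u with h0 | h0
      · rw [h0, Nat.mul_zero] at hu; omega
      · exact h0
    · by_contra hu2
      have h3 : 2^(k-i) * (2^i + 1) ≤ 2^(k-i) * u :=
        Nat.mul_le_mul_left _ (by omega)
      rw [Nat.mul_add, Nat.mul_one, Nat.mul_comm (2^(k-i)) (2^i), ← h2k] at h3
      omega
  rw [show (2^i : ℕ) = (Finset.range (2^i)).card by simp]
  apply Finset.card_le_card_of_injOn (fun t => (t + 1 + 2^(k-1-i)) / 2^(k-i) - 1)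
  · intro t ht
    simp only [Finset.coe_filter, Set.mem_setOf_eq, Finset.mem_filter, Finset.mem_Ico] at ht
    obtain ⟨u, hu, hu1, hu2⟩ := key t ht.1.2 ht.2
    beta_reduce
    rw [hu, Nat.mul_div_cancel_left _ (Nat.two_pow_pos _)]
    simp only [Finset.coe_range, Set.mem_Iio]
    omega
  · intro a ha b hb hab
    simp only [Finset.coe_filter, Set.mem_setOf_eq, Finset.mem_Ico] at ha hb
    simp only at hab
    obtain ⟨ua, hua, hua1, _⟩ := key a ha.1.2 ha.2
    obtain ⟨ub, hub, hub1, _⟩ := key b hb.1.2 hb.2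
    rw [hua, hub, Nat.mul_div_cancel_left _ (Nat.two_pow_pos _),
      Nat.mul_div_cancel_left _ (Nat.two_pow_pos _)] at hab
    have : ua = ub := by omega
    subst this
    omega

lemma card_small_subsets (N t : ℕ) :
    ((Finset.range N).powerset.filter (fun S => S.card ≤ t)).card
      = ∑ c ∈ Finset.range (t+1), N.choose c := by
  have heq : (Finset.range N).powerset.filter (fun S => S.card ≤ t)
      = (Finset.range (t+1)).biUnion (fun c => (Finset.range N).powersetCard c) := by
    ext S
    simp only [Finset.mem_filter, Finset.mem_powerset, Finset.mem_biUnion,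
      Finset.mem_range, Finset.mem_powersetCard]
    constructor
    · rintro ⟨h1, h2⟩
      exact ⟨S.card, by omega, h1, rfl⟩
    · rintro ⟨c, hc, h1, h2⟩
      exact ⟨h1, by omega⟩
  rw [heq, Finset.card_biUnion]
  · apply Finset.sum_congr rfl
    intro c _
    rw [Finset.card_powersetCard, Finset.card_range]
  · intro x _ y _ hxy
    simp only [Function.onFun]
    rw [Finset.disjoint_left]
    intro S hS hS'
    rw [Finset.mem_powersetCard] at hS hS'
    exact hxy (hS.2 ▸ hS'.2 ▸ rfl)

end Stmt2Aux

open Stmt2Aux in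
theorem stmt2 (n k : ℕ) (hn : 2 ≤ n) (hk : 1 ≤ k) (hkn : 2 ^ k ≤ n) :
    ∃ D : Fin k → List Bool → Fin (n - k) → Bool,
      ∀ A : Fin k → Fin (n - k) → Bool,
        ∃ (π : Equiv.Perm (Fin (n - k))) (w : Fin k → List Bool),
          (∀ i : Fin k,
            (w i).length =
              Nat.clog 2 (2 * ∑ j ∈ Finset.range (2 ^ (i : ℕ) + 1),
                Nat.choose (n - k - 1) j)) ∧
          ∀ (i : Fin k) (j : Fin (n - k)), D i (w i) j = A i (π j) := by
  classical
  set m := n - k with hmdef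
  have hm1 : 1 ≤ m := by have := Nat.lt_two_pow_self (n := k); omega
  have hclamp : ∀ t : ℕ, min t (m-1) < m := fun t => by omega
  set clamp : ℕ → Fin m := fun t => ⟨min t (m-1), hclamp t⟩ with hclampdef
  have clamp_mono : Monotone clamp := by
    intro a b hab
    simp only [hclampdef, Fin.mk_le_mk]
    omega
  have clamp_fin : ∀ j : Fin m, clamp (j : ℕ) = j := by
    intro j
    apply Fin.ext
    simp only [hclampdef]
    have := j.isLt
    omega
  set ext : (Fin m → Bool) → ℕ → Bool := fun f t => f (clamp t) with hextdef
  set L : ℕ → ℕ := fun i =>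
    Nat.clog 2 (2 * ∑ j ∈ Finset.range (2^i + 1), (m-1).choose j) with hLdef
  set R : ℕ → Finset (Fin m → Bool) := fun i =>
    Finset.univ.filter (fun f => cnt (ext f) 0 (m-1) ≤ 2^i) with hRdef
  -- cardinality bound for R i
  have hRcard : ∀ i, (R i).card ≤ 2 ^ L i := by
    intro i
    have h1 : (R i).card ≤ ((Finset.univ : Finset Bool) ×ˢ
        ((Finset.range (m-1)).powerset.filter (fun S => S.card ≤ 2^i))).card := by
      apply Finset.card_le_card_of_injOn
        (fun f => (ext f 0, (Finset.Ico 0 (m-1)).filter (fun t => ext f t ≠ ext f (t+1))))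
      · intro f hf
        simp only [hRdef, Finset.coe_filter, Set.mem_setOf_eq, Finset.mem_filter, Finset.mem_univ, true_and] at hf
        rw [Finset.mem_coe, Finset.mem_product]
        refine ⟨Finset.mem_univ _, ?_⟩
        rw [Finset.mem_filter, Finset.mem_powerset]
        constructor
        · intro t ht
          simp only [Finset.mem_filter, Finset.mem_Ico] at ht
          simp only [Finset.mem_range]
          omega
        · exact hf
      · intro f hf g hg hfg
        simp only [Prod.mk.injEq] at hfg
        have hdet : ∀ t ≤ m - 1, ext f t = ext g t := by
          apply eq_of_changes_eq (ext f) (ext g) (m-1) hfg.1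
          intro t ht
          have hmem := Finset.ext_iff.mp hfg.2 t
          simp only [Finset.mem_filter, Finset.mem_Ico] at hmem
          constructor
          · intro h; exact (hmem.mp ⟨⟨Nat.zero_le t, ht⟩, h⟩).2
          · intro h; exact (hmem.mpr ⟨⟨Nat.zero_le t, ht⟩, h⟩).2
        funext j
        have h2 := hdet (j : ℕ) (by have := j.isLt; omega)
        simpa only [hextdef, clamp_fin] using h2
    have h2 : ((Finset.univ : Finset Bool) ×ˢ
        ((Finset.range (m-1)).powerset.filter (fun S => S.card ≤ 2^i))).card
        = 2 * ∑ j ∈ Finset.range (2^i + 1), (m-1).choose j := by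
      rw [Finset.card_product, card_small_subsets]
      simp
    have h3 : 2 * ∑ j ∈ Finset.range (2^i + 1), (m-1).choose j ≤ 2 ^ L i :=
      Nat.le_pow_clog one_lt_two _
    omega
  -- an embedding of the admissible rows into bit vectors
  have hNE : ∀ i : ℕ, Nonempty {f // f ∈ R i} := by
    intro i
    refine ⟨⟨fun _ => false, ?_⟩⟩
    simp only [hRdef, Finset.mem_filter, Finset.mem_univ, true_and]
    have hz : cnt (ext (fun _ => false)) 0 (m-1) = 0 := by
      unfold cnt
      simp [hextdef]
    exact hz.le.trans (Nat.zero_le _)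
  have hemb : ∀ i : ℕ, Nonempty ({f // f ∈ R i} ↪ List.Vector Bool (L i)) := by
    intro i
    apply Function.Embedding.nonempty_of_card_le
    rw [Fintype.card_coe, card_vector, Fintype.card_bool]
    exact hRcard i
  let ι : (i : ℕ) → ({f // f ∈ R i} ↪ List.Vector Bool (L i)) :=
    fun i => (hemb i).some
  let enc : (i : ℕ) → {f // f ∈ R i} → List Bool := fun i f => (ι i f).toList
  have henc_inj : ∀ i, Function.Injective (enc i) := by
    intro i a b hab
    exact (ι i).injective (List.Vector.toList_injective hab)
  refine ⟨fun i w j => (@Function.invFun _ _ (hNE i) (enc i) w).val j, ?_⟩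
  intro A
  -- sort the columns by Gray rank
  set col : Fin m → ℕ → Bool := fun j t => if ht : t < k then A ⟨t, ht⟩ j else false
    with hcoldef
  set κ : Fin m → ℕ := fun j => rnk k (col j) with hκdef
  set π : Equiv.Perm (Fin m) := Tuple.sort κ with hπdef
  have hA : ∀ (i : Fin k) (j : Fin m), A i j = g k (i : ℕ) (κ j) := by
    intro i j
    rw [hκdef]
    rw [g_rnk k (col j) i.isLt, hcoldef]
    simp [i.isLt]
  have hmem : ∀ i : Fin k, (fun j => A i (π j)) ∈ R i := by
    intro i
    simp only [hRdef, Finset.mem_filter, Finset.mem_univ, true_and]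
    have hs : Monotone (fun t => κ (π (clamp t))) :=
      (Tuple.monotone_sort κ).comp clamp_mono
    have hfun : ext (fun j => A i (π j)) = fun t => g k (i : ℕ) (κ (π (clamp t))) := by
      funext t
      simp only [hextdef]
      exact hA i (π (clamp t))
    rw [hfun]
    calc cnt (fun t => g k (i : ℕ) (κ (π (clamp t)))) 0 (m-1)
        ≤ cnt (g k (i : ℕ)) (κ (π (clamp 0))) (κ (π (clamp (m-1)))) :=
          cnt_comp_monotone (g k (i : ℕ)) hs 0 (m-1) (Nat.zero_le _)
      _ ≤ cnt (g k (i : ℕ)) 0 (2^k) :=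
          cnt_le_of_subinterval _ (Nat.zero_le _) (hs (Nat.zero_le _))
            (le_of_lt (rnk_lt k _))
      _ ≤ 2 ^ (i : ℕ) := cnt_g k (i : ℕ) i.isLt
  refine ⟨π, fun i => enc (i : ℕ) ⟨fun j => A i (π j), hmem i⟩, ?_, ?_⟩
  · intro i
    exact List.Vector.toList_length _
  · intro i j
    have h1 : (@Function.invFun _ _ (hNE (i : ℕ)) (enc (i : ℕ))
        (enc (i : ℕ) ⟨fun j => A i (π j), hmem i⟩)) = ⟨fun j => A i (π j), hmem i⟩ :=
      @Function.leftInverse_invFun _ _ (hNE (i : ℕ)) _ (henc_inj (i : ℕ)) _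
    beta_reduce
    rw [h1]
end

section
/- Let k ≥ 1 and m ≥ 1, and let ℓ_0, ..., ℓ_{k-1} be integers with 0 ≤ ℓ_i ≤ m for every i. Set L = ⌈(∑_{i=0}^{k-1} ℓ_i)/m⌉. Then there exists a decoding function D such that for every k×m Boolean matrix A = (a_{i,j}) there exist binary strings x_0, ..., x_{k-1} and y_0, ..., y_{m-1}, where x_i has length exactly m - ℓ_i and every y_j has length exactly L, satisfying D(i, x_i, j, y_j) = a_{i,j} for all i ∈ {0,...,k-1} and j ∈ {0,...,m-1}. -/
namespace Stmt3Aux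

variable {k m : ℕ} [NeZero m] (ℓ : Fin k → ℕ)

/-- prefix sums -/
def P (i : Fin k) : ℕ := ∑ i' ∈ Finset.Iio i, ℓ i'

/-- cyclic offset of column j in row i's hole-interval -/
def d (i : Fin k) (j : Fin m) : ℕ := (((j : ℕ) : ZMod m) - ((P ℓ i : ℕ) : ZMod m)).val

lemma d_lt (i : Fin k) (j : Fin m) : d ℓ i j < m := ZMod.val_lt _

lemma P_add_le (i : Fin k) : P ℓ i + ℓ i ≤ ∑ i', ℓ i' := by
  have h1 : P ℓ i + ℓ i = ∑ i' ∈ insert i (Finset.Iio i), ℓ i' := by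
    rw [Finset.sum_insert (by simp), P, add_comm]
  rw [h1]
  exact Finset.sum_le_sum_of_subset (Finset.subset_univ _)

lemma P_mono {a b : Fin k} (hab : a < b) : P ℓ a + ℓ a ≤ P ℓ b := by
  have h1 : P ℓ a + ℓ a = ∑ i' ∈ insert a (Finset.Iio a), ℓ i' := by
    rw [Finset.sum_insert (by simp), P, add_comm]
  rw [h1]
  apply Finset.sum_le_sum_of_subset
  intro x hx
  simp only [Finset.mem_insert, Finset.mem_Iio] at *
  rcases hx with rfl | hx
  · exact hab
  · exact hx.trans hab

lemma unique_row {a b : Fin k} {t : ℕ} (ha1 : P ℓ a ≤ t) (ha2 : t < P ℓ a + ℓ a)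
    (hb1 : P ℓ b ≤ t) (hb2 : t < P ℓ b + ℓ b) : a = b := by
  rcases lt_trichotomy a b with h | h | h
  · have := P_mono ℓ h; omega
  · exact h
  · have := P_mono ℓ h; omega

lemma t_mod (i : Fin k) (j : Fin m) : (P ℓ i + d ℓ i j) % m = (j : ℕ) := by
  have hz : ((P ℓ i + d ℓ i j : ℕ) : ZMod m) = (((j : ℕ) : ZMod m)) := by
    push_cast [d]
    rw [ZMod.natCast_val, ZMod.cast_id]
    ring
  have := congrArg ZMod.val hz
  rwa [ZMod.val_natCast, ZMod.val_natCast, Nat.mod_eq_of_lt j.isLt] at this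

lemma d_inj (i : Fin k) : Function.Injective (fun j : Fin m => d ℓ i j) := by
  intro j1 j2 h
  simp only [] at h
  have h2 : (((j1 : ℕ) : ZMod m) - ((P ℓ i : ℕ) : ZMod m))
      = (((j2 : ℕ) : ZMod m) - ((P ℓ i : ℕ) : ZMod m)) := ZMod.val_injective m h
  have h3 : (((j1 : ℕ) : ZMod m)) = (((j2 : ℕ) : ZMod m)) := by
    have := congrArg (· + ((P ℓ i : ℕ) : ZMod m)) h2
    simpa using this
  have := congrArg ZMod.val h3
  rw [ZMod.val_cast_of_lt j1.isLt, ZMod.val_cast_of_lt j2.isLt] at this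
  exact Fin.ext this

lemma card_holes (i : Fin k) (hli : ℓ i ≤ m) :
    (Finset.univ.filter fun j : Fin m => d ℓ i j < ℓ i).card = ℓ i := by
  have h1 : (Finset.univ.filter fun j : Fin m => d ℓ i j < ℓ i).card
      = (Finset.univ.filter fun r : Fin m => (r : ℕ) < ℓ i).card := by
    apply Finset.card_nbij (fun j => (⟨d ℓ i j, d_lt ℓ i j⟩ : Fin m))
    · intro a ha; simp at ha ⊢; exact ha
    · intro a _ b _ hab
      exact d_inj ℓ i (by simpa [Fin.ext_iff] using hab)
    · intro r hr
      simp only [Finset.coe_filter, Set.mem_setOf_eq, Finset.mem_univ, true_and] at hr ⊢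
      refine ⟨⟨((((r : ℕ) : ZMod m) + ((P ℓ i : ℕ) : ZMod m)).val), ZMod.val_lt _⟩, ?_, ?_⟩
      · show d ℓ i _ < ℓ i
        simp only [d]
        rw [ZMod.natCast_val, ZMod.cast_id, add_sub_cancel_right,
          ZMod.val_cast_of_lt r.isLt]
        exact hr
      · apply Fin.ext
        show d ℓ i _ = (r : ℕ)
        simp only [d]
        rw [ZMod.natCast_val, ZMod.cast_id, add_sub_cancel_right,
          ZMod.val_cast_of_lt r.isLt]
  rw [h1]
  have h2 : (Finset.univ.filter fun r : Fin m => (r : ℕ) < ℓ i).card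
      = (Finset.range (ℓ i)).card := by
    apply Finset.card_nbij (fun r : Fin m => (r : ℕ))
    · intro a ha; simp at ha ⊢; exact ha
    · intro a _ b _ hab; exact Fin.ext hab
    · intro a ha
      simp only [Finset.coe_range, Set.mem_Iio, Finset.coe_filter, Finset.mem_univ,
        true_and, Set.mem_setOf_eq] at ha ⊢
      exact ⟨⟨a, lt_of_lt_of_le ha hli⟩, ha, rfl⟩
  rw [h2, Finset.card_range]

end Stmt3Aux
theorem stmt3 (k m : ℕ) (hk : 1 ≤ k) (hm : 1 ≤ m)
    (ℓ : Fin k → ℕ) (hℓ : ∀ i, ℓ i ≤ m) :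
    ∃ D : Fin k → List Bool → Fin m → List Bool → Bool,
      ∀ A : Fin k → Fin m → Bool,
        ∃ (x : Fin k → List Bool) (y : Fin m → List Bool),
          (∀ i, (x i).length = m - ℓ i) ∧
          (∀ j, (y j).length = ((∑ i, ℓ i) + m - 1) / m) ∧
          ∀ i j, D i (x i) j (y j) = A i j := by
  classical
  haveI : NeZero m := ⟨by omega⟩
  open Stmt3Aux in
  set N : ℕ := ∑ i, ℓ i with hN
  set L : ℕ := (N + m - 1) / m with hL
  -- row i's "surviving" column list
  set lst : Fin k → List (Fin m) :=
    fun i => (List.finRange m).filter (fun j => decide (ℓ i ≤ d ℓ i j)) with hlst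
  refine ⟨fun i x j y =>
    if d ℓ i j < ℓ i then y.getD ((P ℓ i + d ℓ i j) / m) false
    else x.getD ((lst i).idxOf j) false, ?_⟩
  intro A
  refine ⟨fun i => (lst i).map (A i),
    fun j => (List.range L).map (fun r =>
      if h : ∃ i', P ℓ i' ≤ m * r + (j : ℕ) ∧ m * r + (j : ℕ) < P ℓ i' + ℓ i'
      then A h.choose j else false), ?_, ?_, ?_⟩
  · -- lengths of x
    intro i
    rw [List.length_map]
    have hnd : (lst i).Nodup := List.Nodup.filter _ (List.nodup_finRange m)
    have h1 : (lst i).length = (lst i).toFinset.card :=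
      (List.toFinset_card_of_nodup hnd).symm
    rw [h1, hlst, List.toFinset_filter, List.toFinset_finRange]
    have h2 : (Finset.filter (fun j : Fin m => decide (ℓ i ≤ d ℓ i j) = true) Finset.univ)
        = Finset.filter (fun j : Fin m => ¬ (d ℓ i j < ℓ i)) Finset.univ := by
      apply Finset.filter_congr; intro j _; simp
    rw [h2]
    have h3 := Finset.card_filter_add_card_filter_not
      (s := (Finset.univ : Finset (Fin m))) (fun j : Fin m => d ℓ i j < ℓ i)
    rw [card_holes ℓ i (hℓ i)] at h3
    simp only [Finset.card_univ, Fintype.card_fin] at h3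
    omega
  · intro j; simp
  · intro i j
    by_cases hd : d ℓ i j < ℓ i
    · -- stored in y j
      simp only [hd, if_true]
      set t : ℕ := P ℓ i + d ℓ i j with ht
      have htN : t < N := lt_of_lt_of_le (by omega) (P_add_le ℓ i)
      have hN1 : 1 ≤ N := by omega
      have hLeq : L = (N - 1) / m + 1 := by
        rw [hL]
        have : N + m - 1 = (N - 1) + m := by omega
        rw [this, Nat.add_div_right _ (by omega : 0 < m)]
      have hr : t / m < L := by
        have h8 : t ≤ N - 1 := by omega
        have h9 := Nat.div_le_div_right (c := m) h8
        omega
      have hrm : m * (t / m) + (j : ℕ) = t := by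
        have h6 := Nat.div_add_mod t m
        have h7 : t % m = (j : ℕ) := by rw [ht]; exact t_mod ℓ i j
        omega
      rw [List.getD_eq_getElem _ _ (by simpa using hr), List.getElem_map,
        List.getElem_range]
      have hex : ∃ i', P ℓ i' ≤ m * (t / m) + (j : ℕ) ∧
          m * (t / m) + (j : ℕ) < P ℓ i' + ℓ i' := ⟨i, by omega, by omega⟩
      rw [dif_pos hex]
      have hspec := hex.choose_spec
      have : hex.choose = i := unique_row ℓ hspec.1 hspec.2 (by omega) (by omega)
      rw [this]
    · -- stored in x i
      simp only [hd, if_false]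
      have hmem : j ∈ lst i := by
        rw [hlst]
        simp only [List.mem_filter, List.mem_finRange, true_and, decide_eq_true_eq]
        omega
      have hlt : (lst i).idxOf j < (lst i).length := List.idxOf_lt_length_iff.mpr hmem
      rw [List.getD_eq_getElem _ _ (by simpa using hlt), List.getElem_map,
        List.getElem_idxOf hlt]
end

section
/- Let k ≥ 1 and m ≥ 1, let ℓ_0, ..., ℓ_{k-1} be integers with 0 ≤ ℓ_i ≤ m for every i, and let 0 ≤ C ≤ m be an integer with (∑_{i=0}^{k-1} ℓ_i) + C ≥ 1. Set L = ⌈((∑_{i=0}^{k-1} ℓ_i) + C)/m⌉ - 1. Then there exists a decoding function D such that for every k×m Boolean matrix A = (a_{i,j}) there exist binary strings x_0, ..., x_{k-1} and y_0, ..., y_{m-1}, where x_i has length exactly m - ℓ_i, y_j has length exactly L when j < C and length exactly L + 1 when j ≥ C, satisfying D(i, x_i, j, y_j) = a_{i,j} for all i ∈ {0,...,k-1} and j ∈ {0,...,m-1}. -/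
namespace S4

def cseq (m C t : ℕ) : ℕ := if t < m - C then C + t else (t - (m - C)) % m

def qf (m C j t : ℕ) : ℕ :=
  if t < m - C then 0 else if j < C then (t - (m - C)) / m else (t - (m - C)) / m + 1

def occ (m C j q : ℕ) : ℕ :=
  if j < C then (m - C) + q * m + j else if q = 0 then j - C else (m - C) + (q - 1) * m + j

lemma cseq_lt (m C t : ℕ) (hm : 0 < m) (hC : C ≤ m) : cseq m C t < m := by
  unfold cseq; split
  · omega
  · exact Nat.mod_lt _ hm

lemma occ_qf (m C j t : ℕ) (hm : 0 < m) (hC : C ≤ m) (h : cseq m C t = j) :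
    occ m C j (qf m C j t) = t := by
  unfold cseq at h; unfold occ qf
  by_cases h1 : t < m - C
  · rw [if_pos h1] at h
    have hj : ¬ j < C := by omega
    rw [if_pos h1, if_neg hj, if_pos rfl]
    omega
  · rw [if_neg h1] at h
    rw [if_neg h1]
    have hd := Nat.div_add_mod (t - (m - C)) m
    rw [h] at hd
    set r := (t - (m - C)) / m with hr
    rw [mul_comm] at hd
    by_cases h2 : j < C
    · rw [if_pos h2, if_pos h2]; omega
    · rw [if_neg h2, if_neg h2, if_neg (Nat.succ_ne_zero r), Nat.add_sub_cancel]
      omega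

lemma cseq_ne (m C t1 t2 : ℕ) (hm : 0 < m) (hC : C ≤ m) (h1 : t1 < t2) (h2 : t2 < t1 + m) :
    cseq m C t1 ≠ cseq m C t2 := by
  unfold cseq
  by_cases a1 : t1 < m - C <;> by_cases a2 : t2 < m - C
  · simp only [if_pos a1, if_pos a2]; omega
  · simp only [if_pos a1, if_neg a2]
    have : (t2 - (m - C)) % m = t2 - (m - C) := Nat.mod_eq_of_lt (by omega)
    omega
  · omega
  · simp only [if_neg a1, if_neg a2]
    intro hmod
    have hdvd : m ∣ (t2 - (m - C)) - (t1 - (m - C)) :=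
      (Nat.modEq_iff_dvd' (by omega)).mp hmod
    have := Nat.le_of_dvd (by omega) hdvd
    omega

lemma qf_lt (m C L j t : ℕ) (hm : 0 < m) (hC : C ≤ m) (ht : t < (m - C) + m * L)
    (hj : cseq m C t = j) :
    qf m C j t < if j < C then L else L + 1 := by
  unfold cseq at hj; unfold qf
  by_cases h1 : t < m - C
  · rw [if_pos h1] at hj
    have hjC : ¬ j < C := by omega
    rw [if_pos h1, if_neg hjC]
    omega
  · rw [if_neg h1]
    have hr : (t - (m - C)) / m < L := Nat.div_lt_of_lt_mul (by omega)
    by_cases h2 : j < C <;> simp only [if_pos, if_neg, h2, if_true, if_false] <;> omega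

def pfun (k : ℕ) (ℓ : Fin k → ℕ) (i : Fin k) : ℕ :=
  ∑ i' ∈ Finset.univ.filter (fun i' => i' < i), ℓ i'

lemma pfun_succ (k : ℕ) (ℓ : Fin k → ℕ) (i : Fin k) :
    pfun k ℓ i + ℓ i = ∑ i' ∈ Finset.univ.filter (fun i' => i' ≤ i), ℓ i' := by
  have hins : Finset.univ.filter (fun i' : Fin k => i' ≤ i)
      = insert i (Finset.univ.filter fun i' => i' < i) := by
    ext i'
    simp only [Finset.mem_filter, Finset.mem_univ, true_and, Finset.mem_insert,
      Fin.lt_def, Fin.le_def, Fin.ext_iff]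
    omega
  rw [hins, Finset.sum_insert (by simp)]
  unfold pfun
  omega

lemma pfun_add_le (k : ℕ) (ℓ : Fin k → ℕ) (i : Fin k) :
    pfun k ℓ i + ℓ i ≤ ∑ i', ℓ i' := by
  rw [pfun_succ]
  exact Finset.sum_le_sum_of_subset (Finset.filter_subset _ _)

lemma pfun_mono (k : ℕ) (ℓ : Fin k → ℕ) (i1 i2 : Fin k) (h : i1 < i2) :
    pfun k ℓ i1 + ℓ i1 ≤ pfun k ℓ i2 := by
  rw [pfun_succ]
  apply Finset.sum_le_sum_of_subset
  intro i' hi'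
  simp only [Finset.mem_filter, Finset.mem_univ, true_and] at hi' ⊢
  exact lt_of_le_of_lt hi' h

lemma row_unique (k : ℕ) (ℓ : Fin k → ℕ) (i1 i2 : Fin k) (t : ℕ)
    (h1 : pfun k ℓ i1 ≤ t ∧ t < pfun k ℓ i1 + ℓ i1)
    (h2 : pfun k ℓ i2 ≤ t ∧ t < pfun k ℓ i2 + ℓ i2) : i1 = i2 := by
  rcases lt_trichotomy i1 i2 with h | h | h
  · have := pfun_mono k ℓ i1 i2 h; omega
  · exact h
  · have := pfun_mono k ℓ i2 i1 h; omega

def img (k m C : ℕ) (ℓ : Fin k → ℕ) (i : Fin k) : Finset ℕ :=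
  (Finset.Ico (pfun k ℓ i) (pfun k ℓ i + ℓ i)).image (cseq m C)

lemma mem_img_lt (k m C : ℕ) (ℓ : Fin k → ℕ) (i : Fin k) (hm : 0 < m) (hC : C ≤ m)
    (u : ℕ) (hu : u ∈ img k m C ℓ i) : u < m := by
  obtain ⟨t, -, rfl⟩ := Finset.mem_image.mp hu
  exact cseq_lt m C t hm hC

lemma card_img (k m C : ℕ) (ℓ : Fin k → ℕ) (i : Fin k) (hm : 0 < m) (hC : C ≤ m)
    (hℓ : ℓ i ≤ m) : (img k m C ℓ i).card = ℓ i := by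
  unfold img
  rw [Finset.card_image_of_injOn, Nat.card_Ico]
  · omega
  · intro t1 ht1 t2 ht2 heq
    simp only [Finset.coe_Ico, Set.mem_Ico] at ht1 ht2
    by_contra hne
    rcases lt_or_gt_of_ne hne with h | h
    · exact cseq_ne m C t1 t2 hm hC h (by omega) heq
    · exact cseq_ne m C t2 t1 hm hC h (by omega) heq.symm

noncomputable def bitf (k m C : ℕ) (ℓ : Fin k → ℕ) (A : Fin k → Fin m → Bool) (t : ℕ) : Bool :=
  if h : (∃ i : Fin k, pfun k ℓ i ≤ t ∧ t < pfun k ℓ i + ℓ i) ∧ cseq m C t < m then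
    A h.1.choose ⟨cseq m C t, h.2⟩
  else false

end S4

theorem stmt4 (k m C : ℕ) (hk : 1 ≤ k) (hm : 1 ≤ m)
    (ℓ : Fin k → ℕ) (hℓ : ∀ i, ℓ i ≤ m) (hC : C ≤ m)
    (hpos : 1 ≤ (∑ i, ℓ i) + C) :
    ∃ D : Fin k → List Bool → Fin m → List Bool → Bool,
      ∀ A : Fin k → Fin m → Bool,
        ∃ (x : Fin k → List Bool) (y : Fin m → List Bool),
          (∀ i, (x i).length = m - ℓ i) ∧
          (∀ j : Fin m, (y j).length =
            if (j : ℕ) < C then ((∑ i, ℓ i) + C + m - 1) / m - 1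
            else ((∑ i, ℓ i) + C + m - 1) / m) ∧
          ∀ i j, D i (x i) j (y j) = A i j := by
  classical
  set S := ∑ i, ℓ i with hS
  set e := (S + C + m - 1) / m with he
  have hd := Nat.div_add_mod (S + C + m - 1) m
  have hmlt : (S + C + m - 1) % m < m := Nat.mod_lt _ (by omega)
  rw [← he] at hd
  set P := m * e with hP
  have hPe : S + C ≤ P := by omega
  have he1 : 1 ≤ e := by
    rcases Nat.eq_zero_or_pos e with h0 | h0
    · rw [h0, mul_zero] at hP; omega
    · exact h0
  set L := e - 1 with hL
  have heL : e = L + 1 := by omega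
  have hQP : m * L + m = P := by rw [hP, heL, mul_add, mul_one]
  set Q := m * L with hQ
  have hSN : S ≤ (m - C) + Q := by omega
  have hple : ∀ i, S4.pfun k ℓ i + ℓ i ≤ S := fun i => S4.pfun_add_le k ℓ i
  refine ⟨fun i xs j ys =>
    if h : (j : ℕ) ∈ S4.img k m C ℓ i then
      ys.getD (S4.qf m C (j : ℕ) (Finset.mem_image.mp h).choose) false
    else
      xs.getD (((List.finRange m).filter
        (fun j' : Fin m => decide ((j' : ℕ) ∉ S4.img k m C ℓ i))).idxOf j) false, ?_⟩
  intro A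
  refine ⟨fun i => ((List.finRange m).filter
      (fun j' : Fin m => decide ((j' : ℕ) ∉ S4.img k m C ℓ i))).map (A i),
    fun j => (List.range (if (j : ℕ) < C then L else L + 1)).map
      (fun q => S4.bitf k m C ℓ A (S4.occ m C (j : ℕ) q)), ?_, ?_, ?_⟩
  · -- x lengths
    intro i
    rw [List.length_map]
    set lst := (List.finRange m).filter
      (fun j' : Fin m => decide ((j' : ℕ) ∉ S4.img k m C ℓ i)) with hlst
    have hnd : lst.Nodup := (List.nodup_finRange m).filter _
    have h2 : lst.length = lst.toFinset.card := (List.toFinset_card_of_nodup hnd).symm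
    have h1 : lst.toFinset = Finset.univ.filter (fun j : Fin m => (j : ℕ) ∉ S4.img k m C ℓ i) := by
      ext j'
      simp [hlst, List.mem_filter]
    have h3 : (Finset.univ.filter (fun j : Fin m => (j : ℕ) ∈ S4.img k m C ℓ i)).card = ℓ i := by
      rw [← S4.card_img k m C ℓ i (by omega) hC (hℓ i)]
      refine Finset.card_nbij (fun j => (j : ℕ)) ?_ ?_ ?_
      · intro a ha; simpa using ha
      · intro a _ b _ hab; exact Fin.ext hab
      · intro u hu
        simp only [Finset.coe_filter, Set.mem_setOf_eq] at hu ⊢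
        exact ⟨⟨u, S4.mem_img_lt k m C ℓ i (by omega) hC u hu⟩, ⟨by simp, by simpa using hu⟩, rfl⟩
    have h4 := Finset.card_filter_add_card_filter_not
      (s := (Finset.univ : Finset (Fin m))) (p := fun j : Fin m => (j : ℕ) ∈ S4.img k m C ℓ i)
    simp only [Finset.card_univ, Fintype.card_fin] at h4
    rw [h2, h1]
    omega
  · -- y lengths
    intro j
    rw [List.length_map, List.length_range]
    split <;> omega
  · -- correctness
    intro i j
    dsimp only
    by_cases h : (j : ℕ) ∈ S4.img k m C ℓ i
    · rw [dif_pos h]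
      obtain ⟨htmem, htc⟩ := (Finset.mem_image.mp h).choose_spec
      set t := (Finset.mem_image.mp h).choose with hT
      rw [Finset.mem_Ico] at htmem
      have htS : t < (m - C) + m * L := by
        have := hple i; rw [← hQ]; omega
      have hqlt : S4.qf m C (j : ℕ) t < if (j : ℕ) < C then L else L + 1 :=
        S4.qf_lt m C L (j : ℕ) t (by omega) hC htS htc
      rw [List.getD_eq_getElem?_getD, List.getElem?_map, List.getElem?_range hqlt]
      simp only [Option.map_some, Option.getD_some]
      rw [S4.occ_qf m C (j : ℕ) t (by omega) hC htc]
      unfold S4.bitf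
      have hcond : (∃ i' : Fin k, S4.pfun k ℓ i' ≤ t ∧ t < S4.pfun k ℓ i' + ℓ i') ∧
          S4.cseq m C t < m := ⟨⟨i, htmem.1, htmem.2⟩, by rw [htc]; exact j.isLt⟩
      rw [dif_pos hcond]
      have hii : hcond.1.choose = i := S4.row_unique k ℓ _ i t hcond.1.choose_spec ⟨htmem.1, htmem.2⟩
      rw [hii]
      congr 1
      exact Fin.ext htc
    · rw [dif_neg h]
      set lst := (List.finRange m).filter
        (fun j' : Fin m => decide ((j' : ℕ) ∉ S4.img k m C ℓ i)) with hlst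
      have hmem : j ∈ lst := by
        rw [hlst, List.mem_filter]
        exact ⟨List.mem_finRange j, by simpa using h⟩
      have hidx : lst.idxOf j < lst.length := List.idxOf_lt_length_iff.mpr hmem
      rw [List.getD_eq_getElem?_getD, List.getElem?_map,
        List.getElem?_eq_getElem hidx, List.getElem_idxOf hidx]
      rfl
end

section
/- For every n ≥ 1 there exist a function adj, assigning to each simple graph G on the vertex set [n] = {0,1,...,n-1} and each vertex u ∈ [n] a ⌊n/2⌋-bit string adj(G)(u), and a function D : ([n] × {0,1}^{⌊n/2⌋}) × ([n] × {0,1}^{⌊n/2⌋}) → {0,1}, such that for every simple graph G on [n] and all vertices u ≠ v, u and v are adjacent in G if and only if D((u, adj(G)(u)), (v, adj(G)(v))) = 1. -/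
open Fin.NatCast in
theorem stmt7 (n : ℕ) (hn : 1 ≤ n) :
    ∃ (adj : SimpleGraph (Fin n) → Fin n → (Fin (n / 2) → Bool))
      (D : (Fin n × (Fin (n / 2) → Bool)) → (Fin n × (Fin (n / 2) → Bool)) → Bool),
      ∀ (G : SimpleGraph (Fin n)) (u v : Fin n), u ≠ v →
        (G.Adj u v ↔ D (u, adj G u) (v, adj G v) = true) := by
  classical
  haveI : NeZero n := ⟨by omega⟩
  refine ⟨fun G u i => decide (G.Adj u (u + ((i.val + 1 : ℕ) : Fin n))),
    fun p q =>
      if h : 0 < n / 2 then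
        (if (q.1 - p.1).val ≤ n / 2
         then p.2 ⟨((q.1 - p.1).val - 1) % (n / 2), Nat.mod_lt _ h⟩
         else q.2 ⟨((p.1 - q.1).val - 1) % (n / 2), Nat.mod_lt _ h⟩)
      else false, ?_⟩
  intro G u v huv
  set d := (v - u).val with hd
  set e := (u - v).val with he
  have hdn : d < n := (v - u).isLt
  have hen : e < n := (u - v).isLt
  have hd0 : d ≠ 0 := by
    simp only [hd]
    intro h
    apply huv
    have : v - u = 0 := Fin.ext h
    have := sub_eq_zero.mp this
    exact this.symm
  have he0 : e ≠ 0 := by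
    simp only [he]
    intro h
    apply huv
    have : u - v = 0 := Fin.ext h
    exact sub_eq_zero.mp this
  have hsum : (e + d) % n = 0 := by
    have : ((u - v) + (v - u)).val = 0 := by
      simp
    rwa [Fin.val_add] at this
  have hed : e + d = n := by
    have h1 : e + d < 2 * n := by omega
    rcases Nat.lt_or_ge (e + d) n with h | h
    · rw [Nat.mod_eq_of_lt h] at hsum; omega
    · have : (e + d) % n = e + d - n := by
        rw [Nat.mod_eq_sub_mod h, Nat.mod_eq_of_lt (by omega)]
      omega
  have hhalf : 0 < n / 2 := by omega
  simp only [dif_pos hhalf]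
  by_cases hc : d ≤ n / 2
  · rw [if_pos hc]
    have hidx : (d - 1) % (n / 2) = d - 1 := Nat.mod_eq_of_lt (by omega)
    have hv : u + (((d - 1) + 1 : ℕ) : Fin n) = v := by
      have : ((d - 1) + 1 : ℕ) = d := by omega
      rw [this, hd, Fin.cast_val_eq_self, add_sub_cancel]
    simp only [← hd, hidx, hv]
    simp
  · rw [if_neg hc]
    have hel : e ≤ n / 2 := by omega
    have hidx : (e - 1) % (n / 2) = e - 1 := Nat.mod_eq_of_lt (by omega)
    have hu : v + (((e - 1) + 1 : ℕ) : Fin n) = u := by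
      have : ((e - 1) + 1 : ℕ) = e := by omega
      rw [this, he, Fin.cast_val_eq_self, add_sub_cancel]
    simp only [← he, hidx, hu]
    rw [G.adj_comm]
    simp
end

section
/- Let n ≥ 2 be even and let r be an integer with 0 ≤ r < n/2, and set t = ⌈((n/2 - r)·(n/2 + r))/n⌉ (which equals ⌈n/4 - r²/n⌉). Then there exists a decoding function D such that for every (n/2 - r)×(n/2 + r) Boolean matrix A = (a_{i,j}) there exist t-bit strings x_0, ..., x_{n/2 - r - 1} and y_0, ..., y_{n/2 + r - 1} satisfying D(i, x_i, j, y_j) = a_{i,j} for all i ∈ {0,...,n/2 - r - 1} and j ∈ {0,...,n/2 + r - 1}. -/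
/-- Position of entry `(i,j)` within row `i`'s storage: the cyclic distance
from `i*t` to `j` modulo `m2`. -/
def pfn (m2 t i j : ℕ) : ℕ := ((j : ZMod m2) - ((i * t : ℕ) : ZMod m2)).val

/-- Rows `i` that do NOT cover column `j` (entry must be stored on the right). -/
def USn (m1 m2 t j : ℕ) : Finset (Fin m1) :=
  Finset.univ.filter (fun i => ¬ pfn m2 t i.val j < t)

/-- Index of row `i` among the rows not covering column `j`. -/
def qfn (m1 m2 t : ℕ) (i : Fin m1) (j : ℕ) : ℕ :=
  ((USn m1 m2 t j).filter (fun i' => i' < i)).card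

lemma pf_inv (m2 t : ℕ) [NeZero m2] (i j : ℕ) (hj : j < m2) :
    ((i * t + pfn m2 t i j : ℕ) : ZMod m2).val = j := by
  unfold pfn
  push_cast
  rw [ZMod.natCast_val, ZMod.cast_id]
  have h : ((i*t : ℕ) : ZMod m2) + ((j:ZMod m2) - ((i*t : ℕ):ZMod m2)) = (j : ZMod m2) := by ring
  push_cast at h
  rw [h, ZMod.val_cast_of_lt hj]

lemma pf_div (m2 t : ℕ) [NeZero m2] (ht : 0 < t) (htm2 : t ≤ m2) (j q : ℕ) :
    pfn m2 t ((q * m2 + j) / t) j = (q * m2 + j) % t := by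
  set k := q * m2 + j with hk
  have h1 : ((k : ℕ) : ZMod m2) = (j : ZMod m2) := by
    rw [hk]; push_cast; simp
  have h2 : k / t * t ≤ k := Nat.div_mul_le_self k t
  have h4 : k - k / t * t = k % t :=
    Nat.sub_eq_of_eq_add (by rw [add_comm, mul_comm, Nat.div_add_mod])
  unfold pfn
  rw [← h1, ← Nat.cast_sub h2, h4, ZMod.val_cast_of_lt (lt_of_lt_of_le (Nat.mod_lt _ ht) htm2)]

lemma US_card_le (m1 m2 t : ℕ) [NeZero m2] (ht : 0 < t) (htm2 : t ≤ m2)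
    (hcount : m1 * m2 ≤ t * (m1 + m2)) (j : ℕ) (hj : j < m2) :
    (USn m1 m2 t j).card ≤ t := by
  by_cases hmt : m1 ≤ t
  · exact le_trans (le_trans (Finset.card_filter_le _ _) (by simp)) hmt
  push_neg at hmt
  have hm1 : 0 < m1 := lt_trans ht hmt
  have hmm : (m1 - t) * m2 ≤ m1 * t := by
    have e : (m1 - t) * m2 + t * m2 = m1 * m2 := by
      rw [← Nat.add_mul, Nat.sub_add_cancel hmt.le]
    have hc' : m1 * m2 ≤ t * m1 + t * m2 := by rw [← Nat.mul_add]; exact hcount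
    have : t * m1 = m1 * t := mul_comm _ _
    linarith
  have hk : ∀ q < m1 - t, q * m2 + j < m1 * t := by
    intro q hq
    calc q * m2 + j < q * m2 + m2 := Nat.add_lt_add_left hj _
      _ = (q + 1) * m2 := by ring
      _ ≤ (m1 - t) * m2 := Nat.mul_le_mul_right _ (by omega)
      _ ≤ m1 * t := hmm
  have hcov : m1 - t ≤ (Finset.univ.filter (fun i : Fin m1 => pfn m2 t i.val j < t)).card := by
    have := Finset.card_le_card_of_injOn
      (f := fun q : ℕ => (⟨(q * m2 + j) / t % m1, Nat.mod_lt _ hm1⟩ : Fin m1))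
      (s := Finset.range (m1 - t))
      (t := Finset.univ.filter (fun i : Fin m1 => pfn m2 t i.val j < t))
      ?_ ?_
    · simpa using this
    · intro q hq
      rw [Finset.mem_coe, Finset.mem_range] at hq
      have hlt : (q * m2 + j) / t < m1 :=
        Nat.div_lt_of_lt_mul (lt_of_lt_of_eq (hk q hq) (mul_comm m1 t))
      simp only [Finset.mem_coe, Finset.mem_filter, Finset.mem_univ, true_and]
      rw [Nat.mod_eq_of_lt hlt, pf_div m2 t ht htm2 j q]
      exact Nat.mod_lt _ ht
    · have mono : ∀ a b : ℕ, a < b → (a * m2 + j) / t < (b * m2 + j) / t := by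
        intro a b hab
        have h1 : a * m2 + j + t ≤ b * m2 + j := by
          have : (a + 1) * m2 ≤ b * m2 := Nat.mul_le_mul_right _ (by omega)
          have h2 : a * m2 + m2 ≤ b * m2 := by rw [← Nat.add_one_mul]; exact this
          omega
        calc (a * m2 + j) / t < (a * m2 + j) / t + 1 := Nat.lt_succ_self _
          _ = (a * m2 + j + t) / t := (Nat.add_div_right _ ht).symm
          _ ≤ (b * m2 + j) / t := Nat.div_le_div_right h1
      intro q1 h1 q2 h2 heq
      rw [Finset.coe_range, Set.mem_Iio] at h1 h2
      have e1 : (q1 * m2 + j) / t = (q2 * m2 + j) / t := by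
        have l1 : (q1 * m2 + j) / t < m1 :=
          Nat.div_lt_of_lt_mul (lt_of_lt_of_eq (hk q1 h1) (mul_comm m1 t))
        have l2 : (q2 * m2 + j) / t < m1 :=
          Nat.div_lt_of_lt_mul (lt_of_lt_of_eq (hk q2 h2) (mul_comm m1 t))
        have := congrArg Fin.val heq
        simpa [Nat.mod_eq_of_lt l1, Nat.mod_eq_of_lt l2] using this
      rcases lt_trichotomy q1 q2 with h | h | h
      · exact absurd e1 (ne_of_lt (mono _ _ h))
      · exact h
      · exact absurd e1.symm (ne_of_lt (mono _ _ h))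
  have hpartition := Finset.card_filter_add_card_filter_not
    (s := (Finset.univ : Finset (Fin m1))) (p := fun i : Fin m1 => pfn m2 t i.val j < t)
  have hcard : (Finset.univ : Finset (Fin m1)).card = m1 := by simp
  unfold USn
  omega

lemma qf_mono (m1 m2 t : ℕ) (j : ℕ) (a b : Fin m1) (ha : a ∈ USn m1 m2 t j) (hab : a < b) :
    qfn m1 m2 t a j < qfn m1 m2 t b j := by
  apply Finset.card_lt_card
  constructor
  · intro x hx
    rw [Finset.mem_filter] at hx ⊢
    exact ⟨hx.1, lt_trans hx.2 hab⟩
  · intro hsub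
    have hmem : a ∈ (USn m1 m2 t j).filter (fun i' => i' < b) :=
      Finset.mem_filter.mpr ⟨ha, hab⟩
    have := hsub hmem
    rw [Finset.mem_filter] at this
    exact absurd this.2 (lt_irrefl a)

lemma qf_lt (m1 m2 t : ℕ) (j : ℕ) (i : Fin m1) (hi : i ∈ USn m1 m2 t j)
    (hU : (USn m1 m2 t j).card ≤ t) : qfn m1 m2 t i j < t := by
  refine lt_of_lt_of_le (Finset.card_lt_card ?_) hU
  constructor
  · exact Finset.filter_subset _ _
  · intro hsub
    have := hsub hi
    rw [Finset.mem_filter] at this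
    exact absurd this.2 (lt_irrefl i)

theorem key_storage (m1 m2 t : ℕ) (hm2 : 0 < m2) (ht : 0 < t)
    (hU : ∀ j : ℕ, j < m2 → (USn m1 m2 t j).card ≤ t) :
    ∃ D : Fin m1 → (Fin t → Bool) → Fin m2 → (Fin t → Bool) → Bool,
      ∀ A : Fin m1 → Fin m2 → Bool,
        ∃ (x : Fin m1 → Fin t → Bool) (y : Fin m2 → Fin t → Bool),
          ∀ i j, D i (x i) j (y j) = A i j := by
  haveI : NeZero m2 := ⟨hm2.ne'⟩
  refine ⟨fun i xi j yj =>
    if h : pfn m2 t i.val j.val < t then xi ⟨pfn m2 t i.val j.val, h⟩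
    else yj ⟨qfn m1 m2 t i j.val % t, Nat.mod_lt _ ht⟩, ?_⟩
  intro A
  refine ⟨fun i s => A i ⟨((i.val * t + s.val : ℕ) : ZMod m2).val, ZMod.val_lt _⟩,
    fun j s => if h : ∃ i : Fin m1, i ∈ USn m1 m2 t j.val ∧ qfn m1 m2 t i j.val = s.val
      then A h.choose j else false, ?_⟩
  intro i j
  by_cases h : pfn m2 t i.val j.val < t
  · simp only [dif_pos h]
    congr 1
    exact Fin.ext (pf_inv m2 t i.val j.val j.isLt)
  · simp only [dif_neg h]
    have hi : i ∈ USn m1 m2 t j.val := by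
      unfold USn; simp only [Finset.mem_filter, Finset.mem_univ, true_and]; exact h
    have hq : qfn m1 m2 t i j.val < t := qf_lt m1 m2 t j.val i hi (hU j.val j.isLt)
    have hmod : qfn m1 m2 t i j.val % t = qfn m1 m2 t i j.val := Nat.mod_eq_of_lt hq
    have hex : ∃ i' : Fin m1, i' ∈ USn m1 m2 t j.val ∧
        qfn m1 m2 t i' j.val = qfn m1 m2 t i j.val % t := ⟨i, hi, hmod.symm ▸ rfl⟩
    rw [dif_pos hex]
    have hspec := hex.choose_spec
    have : hex.choose = i := by
      rcases lt_trichotomy hex.choose i with hlt | he | hgt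
      · exfalso
        have := qf_mono m1 m2 t j.val hex.choose i hspec.1 hlt
        omega
      · exact he
      · exfalso
        have := qf_mono m1 m2 t j.val i hex.choose hi hgt
        omega
    rw [this]

theorem stmt11 (n r : ℕ) (hn : 2 ≤ n) (heven : Even n) (hr : r < n / 2) :
    ∃ D : Fin (n / 2 - r) → (Fin (((n / 2 - r) * (n / 2 + r) + n - 1) / n) → Bool) →
          Fin (n / 2 + r) → (Fin (((n / 2 - r) * (n / 2 + r) + n - 1) / n) → Bool) →
          Bool,
      ∀ A : Fin (n / 2 - r) → Fin (n / 2 + r) → Bool,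
        ∃ (x : Fin (n / 2 - r) → (Fin (((n / 2 - r) * (n / 2 + r) + n - 1) / n) → Bool))
          (y : Fin (n / 2 + r) → (Fin (((n / 2 - r) * (n / 2 + r) + n - 1) / n) → Bool)),
          ∀ (i : Fin (n / 2 - r)) (j : Fin (n / 2 + r)),
            D i (x i) j (y j) = A i j := by
  have h2 : n % 2 = 0 := Nat.even_iff.mp heven
  have hn0 : 0 < n := by omega
  set m1 := n / 2 - r with hm1d
  set m2 := n / 2 + r with hm2d
  have hm1 : 0 < m1 := by omega
  have hm2 : 0 < m2 := by omega
  have hsum : m1 + m2 = n := by omega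
  have hm1n : m1 ≤ n := by omega
  set t := (m1 * m2 + n - 1) / n with htd
  have hN : 0 < m1 * m2 := Nat.mul_pos hm1 hm2
  have ht : 0 < t := by
    apply Nat.div_pos _ hn0
    omega
  have htm2 : t ≤ m2 := by
    have h1 : m1 * m2 + n - 1 ≤ n * m2 + (n - 1) := by
      have := Nat.mul_le_mul_right m2 hm1n
      omega
    calc t ≤ (n * m2 + (n - 1)) / n := Nat.div_le_div_right h1
      _ = m2 + (n - 1) / n := by rw [Nat.mul_add_div hn0]
      _ = m2 := by rw [Nat.div_eq_of_lt (by omega), Nat.add_zero]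
  have hceil : m1 * m2 ≤ t * n := by
    have h1 := Nat.div_add_mod (m1 * m2 + n - 1) n
    have h2' : (m1 * m2 + n - 1) % n < n := Nat.mod_lt _ hn0
    rw [htd, mul_comm ((m1 * m2 + n - 1) / n) n]
    set X := m1 * m2 with hX
    set R := (X + n - 1) % n with hR
    set M := n * ((X + n - 1) / n) with hM
    omega
  have hcount : m1 * m2 ≤ t * (m1 + m2) := by rw [hsum]; exact hceil
  haveI : NeZero m2 := ⟨hm2.ne'⟩
  exact key_storage m1 m2 t hm2 ht (fun j hj => US_card_le m1 m2 t ht htm2 hcount j hj)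
end

section
/- Let n ≥ 1 and L ≥ 0, and suppose a family F of simple graphs on [n] = {0,1,...,n-1} admits an indexing L-bit adjacency labeling scheme. Then |F| · n^n ≤ n! · 2^{nL} (equivalently, L ≥ (1/n)·log₂|F| + (1/n)·log₂(n^n/n!) when F is nonempty). -/
open Finset in
lemma amgm_nat (n : ℕ) (hn : 0 < n) (f : Fin n → ℕ) :
    n ^ n * ∏ i, f i ≤ (∑ i, f i) ^ n := by
  have hn' : (n:ℝ) ≠ 0 := Nat.cast_ne_zero.mpr hn.ne'
  have h1 := Real.geom_mean_le_arith_mean_weighted Finset.univ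
      (fun _ => (n:ℝ)⁻¹) (fun i => (f i : ℝ))
      (fun i _ => by positivity)
      (by simp [Finset.sum_const, Finset.card_univ]; field_simp)
      (fun i _ => by positivity)
  have h2 : (∏ i, (f i : ℝ)) ≤ ((∑ i, (f i : ℝ)) / n) ^ n := by
    have hL : (∏ i, (f i:ℝ) ^ ((n:ℝ)⁻¹)) ^ (n:ℕ) = ∏ i, (f i : ℝ) := by
      rw [← Finset.prod_pow]
      refine Finset.prod_congr rfl fun i _ => ?_
      rw [← Real.rpow_natCast ((f i:ℝ) ^ ((n:ℝ)⁻¹)) n,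
        ← Real.rpow_mul (by positivity), inv_mul_cancel₀ hn', Real.rpow_one]
    have hR : (∑ i, (n:ℝ)⁻¹ * (f i:ℝ)) = (∑ i, (f i:ℝ)) / n := by
      rw [← Finset.mul_sum]; ring
    calc ∏ i, (f i:ℝ) = (∏ i, (f i:ℝ) ^ ((n:ℝ)⁻¹)) ^ (n:ℕ) := hL.symm
      _ ≤ (∑ i, (n:ℝ)⁻¹*(f i:ℝ)) ^ (n:ℕ) :=
          pow_le_pow_left₀ (Finset.prod_nonneg fun i _ => by positivity) h1 n
      _ = ((∑ i, (f i:ℝ))/n)^n := by rw [hR]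
  have h3 : (n:ℝ)^n * ∏ i, (f i:ℝ) ≤ (∑ i, (f i:ℝ))^n := by
    calc (n:ℝ)^n * ∏ i, (f i:ℝ) ≤ (n:ℝ)^n * (((∑ i, (f i:ℝ))/n)^n) :=
          mul_le_mul_of_nonneg_left h2 (by positivity)
      _ = (∑ i, (f i:ℝ))^n := by rw [div_pow, mul_div_assoc', mul_div_cancel_left₀ _ (pow_ne_zero _ hn')]
  exact_mod_cast h3

theorem stmt17 (n L : ℕ) (hn : 1 ≤ n) (F : Set (SimpleGraph (Fin n)))
    (Label : SimpleGraph (Fin n) → Fin n → (Fin L → Bool))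
    (Edge : (Fin L → Bool) → (Fin L → Bool) → Bool)
    (Ind : (Fin L → Bool) → Fin n)
    (hscheme : ∀ G ∈ F, ∀ u v : Fin n, u ≠ v →
      (SimpleGraph.Adj G u v ↔ Edge (Label G u) (Label G v) = true))
    (hind : ∀ G ∈ F, Function.Bijective fun u : Fin n => Ind (Label G u)) :
    F.ncard * n ^ n ≤ Nat.factorial n * 2 ^ (n * L) := by
  classical
  let X := (Fin L → Bool)
  -- fibers of Ind
  set m : Fin n → ℕ := fun i => Fintype.card {x : X // Ind x = i} with hm
  -- Step A : Label is injective on F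
  have hinj : Set.InjOn Label F := by
    intro G hG G' hG' h
    ext u v
    by_cases huv : u = v
    · subst huv; simp
    · rw [hscheme G hG u v huv, hscheme G' hG' u v huv, h]
  -- the finset of "good" labelings
  set S : Finset (Fin n → X) :=
    Finset.univ.filter (fun ℓ => Function.Bijective fun u => Ind (ℓ u)) with hS
  have hsub : Label '' F ⊆ ↑S := by
    rintro _ ⟨G, hG, rfl⟩
    simp only [hS, Finset.coe_filter, Set.mem_setOf_eq, Finset.mem_univ, true_and]
    exact hind G hG
  have hA : F.ncard ≤ S.card := by
    rw [← Set.ncard_image_of_injOn hinj]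
    calc (Label '' F).ncard ≤ (↑S : Set (Fin n → X)).ncard :=
          Set.ncard_le_ncard hsub S.finite_toSet
      _ = S.card := Set.ncard_coe_finset S
  -- Step B : S.card ≤ n! * ∏ m i
  have hB : S.card ≤ Nat.factorial n * ∏ i, m i := by
    have : Fintype.card ↥S ≤
        Fintype.card (Equiv.Perm (Fin n) × (∀ i : Fin n, {x : X // Ind x = i})) := by
      apply Fintype.card_le_of_injective
        (fun (ℓ : ↥S) =>
          have hb : Function.Bijective fun u => Ind (ℓ.1 u) :=
            (Finset.mem_filter.mp ℓ.2).2
          let e := Equiv.ofBijective _ hb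
          (e, fun i => ⟨ℓ.1 (e.symm i), by exact e.apply_symm_apply i⟩))
      rintro ⟨ℓ, hℓ⟩ ⟨ℓ', hℓ'⟩ h
      simp only [Prod.mk.injEq] at h
      obtain ⟨he, hg⟩ := h
      apply Subtype.ext
      funext u
      have := congrFun hg ((Equiv.ofBijective _ ((Finset.mem_filter.mp hℓ).2)) u)
      rw [Subtype.ext_iff] at this
      simpa [he, Equiv.symm_apply_apply] using this
    simpa [Fintype.card_prod, Fintype.card_pi, Fintype.card_perm, Fintype.card_fin,
      Fintype.card_coe] using this
  -- Step C : ∑ m i = 2 ^ L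
  have hC : (∑ i, m i) = 2 ^ L := by
    have : (∑ i, m i) = Fintype.card X := (Fintype.card_sigma).symm.trans ?_
    · rw [this]; simp [X]
    · exact Fintype.card_congr (Equiv.sigmaFiberEquiv Ind)
  -- AM-GM
  have hD : n ^ n * ∏ i, m i ≤ 2 ^ (n * L) := by
    calc n ^ n * ∏ i, m i ≤ (∑ i, m i) ^ n := amgm_nat n hn (fun i => m i)
      _ = (2 ^ L) ^ n := by rw [hC]
      _ = 2 ^ (n * L) := by rw [← pow_mul, mul_comm]
  calc F.ncard * n ^ n ≤ (Nat.factorial n * ∏ i, m i) * n ^ n :=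
        Nat.mul_le_mul_right _ (hA.trans hB)
    _ = Nat.factorial n * (n ^ n * ∏ i, m i) := by ring
    _ ≤ Nat.factorial n * 2 ^ (n * L) := Nat.mul_le_mul_left _ hD
end

section
/- Suppose the family of ALL simple graphs on [n] = {0,1,...,n-1} admits an L-bit adjacency labeling scheme. If n ≥ 4, then L ≥ ⌈n/2⌉. If moreover the scheme is indexing and n ≥ 200, then L ≥ ⌈n/2⌉ + 1. -/
open Finset Nat

/-- Build a graph from an edge-indicator on non-diagonal `Sym2` elements. -/
def mkGraph {n : ℕ} (g : {e : Sym2 (Fin n) // ¬ e.IsDiag} → Bool) : SimpleGraph (Fin n) where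
  Adj u v := u ≠ v ∧ (if h : (s(u, v) : Sym2 (Fin n)).IsDiag then false else g ⟨s(u, v), h⟩) = true
  symm := by
    constructor
    rintro u v ⟨h1, h2⟩
    refine ⟨h1.symm, ?_⟩
    rwa [Sym2.eq_swap]
  loopless := by constructor; rintro u ⟨h, -⟩; exact h rfl

lemma mkGraph_inj {n : ℕ} : Function.Injective (mkGraph (n := n)) := by
  intro g g' h
  funext e
  obtain ⟨p, hp⟩ := e
  revert hp
  induction p using Sym2.ind with
  | _ a b =>
    intro hp
    have hab : a ≠ b := by simpa [Sym2.mk_isDiag_iff] using hp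
    have hA : (mkGraph g).Adj a b ↔ (mkGraph g').Adj a b := by rw [h]
    simp only [mkGraph, dif_neg hp, ne_eq] at hA
    by_cases hg : g ⟨s(a, b), hp⟩ = true
    · have : g' ⟨s(a, b), hp⟩ = true := (hA.1 ⟨hab, hg⟩).2
      rw [hg, this]
    · by_cases hg' : g' ⟨s(a, b), hp⟩ = true
      · exact absurd (hA.2 ⟨hab, hg'⟩).2 hg
      · rw [Bool.not_eq_true] at hg hg'
        rw [hg, hg']

/-- AM-GM for naturals. -/
lemma nat_amgm (n : ℕ) (m : Fin n → ℕ) : n ^ n * ∏ i, m i ≤ (∑ i, m i) ^ n := by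
  rcases Nat.eq_zero_or_pos n with rfl | hn
  · simp
  have hn' : (0 : ℝ) < n := by exact_mod_cast hn
  have hR : (n : ℝ) ^ n * ∏ i, (m i : ℝ) ≤ (∑ i, (m i : ℝ)) ^ n := by
    have key := Real.geom_mean_le_arith_mean_weighted Finset.univ
      (fun _ : Fin n => (n : ℝ)⁻¹) (fun i => (m i : ℝ))
      (fun i _ => by positivity)
      (by simp [Finset.sum_const, Finset.card_univ]; field_simp)
      (fun i _ => by positivity)
    set S : ℝ := ∑ i, (m i : ℝ) with hS
    have hprod : (∏ i, (m i : ℝ)) ≤ (S / n) ^ n := by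
      have h1 := pow_le_pow_left₀
        (Finset.prod_nonneg (fun i _ => Real.rpow_nonneg (by positivity) _)) key n
      calc (∏ i, (m i : ℝ)) = (∏ i, (m i : ℝ) ^ ((n : ℝ)⁻¹)) ^ n := by
            rw [← Finset.prod_pow]
            refine Finset.prod_congr rfl fun i _ => ?_
            rw [← Real.rpow_natCast ((m i : ℝ) ^ ((n : ℝ)⁻¹)) n,
              ← Real.rpow_mul (by positivity), inv_mul_cancel₀ (by exact_mod_cast hn.ne'),
              Real.rpow_one]
        _ ≤ (∑ i, (n : ℝ)⁻¹ * (m i : ℝ)) ^ n := h1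
        _ = (S / n) ^ n := by rw [← Finset.mul_sum, inv_mul_eq_div]
    calc (n : ℝ) ^ n * ∏ i, (m i : ℝ) ≤ (n : ℝ) ^ n * (S / n) ^ n :=
          mul_le_mul_of_nonneg_left hprod (by positivity)
      _ = ((n : ℝ) * (S / n)) ^ n := (mul_pow _ _ _).symm
      _ = S ^ n := by rw [mul_div_cancel₀ _ hn'.ne']
  exact_mod_cast hR

lemma two_mul_pow_le_succ (n : ℕ) (hn : 1 ≤ n) : 2 * n ^ n ≤ (n + 1) ^ n := by
  have hn' : (0 : ℝ) < n := by exact_mod_cast hn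
  have h : (2 : ℝ) * (n : ℝ) ^ n ≤ ((n : ℝ) + 1) ^ n := by
    have hb : (1 : ℝ) + n * (n : ℝ)⁻¹ ≤ (1 + (n : ℝ)⁻¹) ^ n :=
      one_add_mul_le_pow (le_trans (by norm_num : (-2:ℝ) ≤ 0) (by positivity)) n
    have h2 : (1 : ℝ) + (n : ℝ) * (n : ℝ)⁻¹ = 2 := by rw [mul_inv_cancel₀ hn'.ne']; norm_num
    have h3 : ((n : ℝ) + 1) ^ n = (n : ℝ) ^ n * (1 + (n : ℝ)⁻¹) ^ n := by
      rw [← mul_pow]; congr 1; field_simp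
    rw [h3]
    nlinarith [pow_nonneg hn'.le n]
  exact_mod_cast h

lemma two_pow_mul_factorial_lt (n : ℕ) (hn : 6 ≤ n) : 2 ^ n * n ! < n ^ n := by
  induction n with
  | zero => omega
  | succ k ih =>
    rcases Nat.lt_or_ge k 6 with hk | hk
    · have hk5 : k = 5 := by omega
      subst hk5
      decide
    · have h1 := ih hk
      have h2 := two_mul_pow_le_succ k (by omega)
      calc 2 ^ (k + 1) * (k + 1)! = (2 * (k + 1)) * (2 ^ k * k !) := by
            rw [Nat.factorial_succ]; ring
        _ < (2 * (k + 1)) * k ^ k := by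
            exact mul_lt_mul_of_pos_left h1 (by positivity)
        _ = (k + 1) * (2 * k ^ k) := by ring
        _ ≤ (k + 1) * (k + 1) ^ k := Nat.mul_le_mul_left _ h2
        _ = (k + 1) ^ (k + 1) := (pow_succ' _ _).symm

theorem stmt18 (n L : ℕ)
    (Label : SimpleGraph (Fin n) → Fin n → (Fin L → Bool))
    (Edge : (Fin L → Bool) → (Fin L → Bool) → Bool)
    (hscheme : ∀ (G : SimpleGraph (Fin n)) (u v : Fin n), u ≠ v →
      (G.Adj u v ↔ Edge (Label G u) (Label G v) = true)) :
    (4 ≤ n → (n + 1) / 2 ≤ L) ∧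
    (200 ≤ n →
      (∃ Ind : (Fin L → Bool) → Fin n,
        ∀ G : SimpleGraph (Fin n),
          Function.Bijective fun u : Fin n => Ind (Label G u)) →
      (n + 1) / 2 + 1 ≤ L) := by
  classical
  -- The labelling map is injective on graphs.
  have label_inj : Function.Injective (fun G : SimpleGraph (Fin n) => Label G) := by
    intro G G' h
    have h' : Label G = Label G' := h
    ext u v
    rcases eq_or_ne u v with rfl | huv
    · simp
    · rw [hscheme G u v huv, hscheme G' u v huv, h']
  -- Lower bound on the number of graphs.
  have h_lower : 2 ^ n.choose 2 ≤ Fintype.card (SimpleGraph (Fin n)) := by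
    calc 2 ^ n.choose 2
        = Fintype.card ({e : Sym2 (Fin n) // ¬ e.IsDiag} → Bool) := by
          rw [Fintype.card_fun, Fintype.card_bool, Sym2.card_subtype_not_diag,
            Fintype.card_fin]
      _ ≤ Fintype.card (SimpleGraph (Fin n)) := Fintype.card_le_of_injective _ mkGraph_inj
  have h_codom : Fintype.card (Fin n → Fin L → Bool) = 2 ^ (L * n) := by
    rw [Fintype.card_fun, Fintype.card_fun, Fintype.card_bool, Fintype.card_fin,
      Fintype.card_fin, ← pow_mul]
  have h_upper : Fintype.card (SimpleGraph (Fin n)) ≤ 2 ^ (L * n) := by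
    rw [← h_codom]
    exact Fintype.card_le_of_injective _ label_inj
  have h2C : 2 * n.choose 2 = n * (n - 1) := by
    have hdvd : 2 ∣ n * (n - 1) := by
      have := Nat.even_mul_succ_self (n - 1)
      rcases Nat.eq_zero_or_pos n with rfl | hn
      · simp
      · have hn1 : n - 1 + 1 = n := by omega
        rw [hn1] at this
        rw [mul_comm]
        exact this.two_dvd
    rw [Nat.choose_two_right, Nat.mul_div_cancel' hdvd]
  have hCle : n.choose 2 ≤ L * n := by
    have := h_lower.trans h_upper
    exact (Nat.pow_le_pow_iff_right (by norm_num)).1 this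
  constructor
  · -- Part 1
    intro hn4
    by_contra hL
    push_neg at hL
    -- n - 1 ≤ 2 * L
    have hmul : n * (n - 1) ≤ n * (2 * L) := by
      calc n * (n - 1) = 2 * n.choose 2 := h2C.symm
        _ ≤ 2 * (L * n) := by omega
        _ = n * (2 * L) := by ring
    have hn1le : n - 1 ≤ 2 * L := Nat.le_of_mul_le_mul_left hmul (by omega : 0 < n)
    have h2L : 2 * L = n - 1 := by omega
    have hLge2 : 2 ≤ L := by omega
    -- L * n = n.choose 2
    have hEq : L * n = n.choose 2 := by
      have : 2 * (L * n) = 2 * n.choose 2 := by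
        calc 2 * (L * n) = (2 * L) * n := by ring
          _ = (n - 1) * n := by rw [h2L]
          _ = n * (n - 1) := mul_comm _ _
          _ = 2 * n.choose 2 := h2C.symm
      omega
    have hcard : Fintype.card (SimpleGraph (Fin n)) = Fintype.card (Fin n → Fin L → Bool) := by
      rw [h_codom, hEq]
      exact le_antisymm (by rw [← hEq]; exact h_upper) h_lower
    have hbij : Function.Bijective (fun G : SimpleGraph (Fin n) => Label G) :=
      (Fintype.bijective_iff_injective_and_card _).2 ⟨label_inj, hcard⟩
    have hsurj := hbij.2
    have key : Function.Injective (fun x : Fin L → Bool => Edge x x) := by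
      intro x y hxy
      obtain ⟨Gx, hGx⟩ := hsurj (fun _ => x)
      obtain ⟨Gy, hGy⟩ := hsurj (fun _ => y)
      simp only at hGx hGy
      have hGxy : Gx = Gy := by
        ext u v
        rcases eq_or_ne u v with rfl | huv
        · simp
        · rw [hscheme Gx u v huv, hscheme Gy u v huv,
            congrFun hGx u, congrFun hGx v, congrFun hGy u, congrFun hGy v]
          exact (show Edge x x = Edge y y from hxy) ▸ Iff.rfl
      have : (fun _ : Fin n => x) = fun _ : Fin n => y := by
        rw [← hGx, ← hGy, hGxy]
      exact congrFun this ⟨0, by omega⟩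
    have hle : Fintype.card (Fin L → Bool) ≤ Fintype.card Bool :=
      Fintype.card_le_of_injective _ key
    rw [Fintype.card_fun, Fintype.card_bool, Fintype.card_fin] at hle
    have : 2 ^ 2 ≤ 2 ^ L := Nat.pow_le_pow_right (by norm_num) hLge2
    omega
  · -- Part 2
    rintro hn200 ⟨Ind, hInd⟩
    by_contra hL
    push_neg at hL
    have hL' : 2 * L ≤ n + 1 := by omega
    obtain ⟨k, rfl⟩ : ∃ k, n = k + 1 := ⟨n - 1, by omega⟩
    set m : Fin (k + 1) → ℕ := fun i => Fintype.card {a : Fin L → Bool // Ind a = i} with hm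
    have hsum : ∑ i, m i = 2 ^ L := by
      have hfib := Finset.card_eq_sum_card_fiberwise
        (f := Ind) (s := (Finset.univ : Finset (Fin L → Bool))) (t := Finset.univ)
        (fun x _ => Finset.mem_univ _)
      calc ∑ i, m i = ∑ i, (Finset.univ.filter fun a => Ind a = i).card :=
            Finset.sum_congr rfl fun i _ => Fintype.card_subtype _
        _ = (Finset.univ : Finset (Fin L → Bool)).card := hfib.symm
        _ = 2 ^ L := by rw [Finset.card_univ, Fintype.card_fun, Fintype.card_bool,
              Fintype.card_fin]
    have hcard2 : Fintype.card (SimpleGraph (Fin (k + 1))) ≤ (k + 1)! * ∏ i, m i := by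
      have hco : Fintype.card
          (Equiv.Perm (Fin (k + 1)) × ∀ i : Fin (k + 1), {a : Fin L → Bool // Ind a = i})
          = (k + 1)! * ∏ i, m i := by
        rw [Fintype.card_prod, Fintype.card_perm, Fintype.card_fin, Fintype.card_pi]
      rw [← hco]
      refine Fintype.card_le_of_injective
        (fun G => (Equiv.ofBijective _ (hInd G),
          fun i => ⟨Label G ((Equiv.ofBijective _ (hInd G)).symm i),
            (Equiv.ofBijective _ (hInd G)).apply_symm_apply i⟩)) ?_
      intro G G' h
      have h1 : Equiv.ofBijective _ (hInd G) = Equiv.ofBijective _ (hInd G') :=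
        congrArg Prod.fst h
      have h2 := congrArg Prod.snd h
      apply label_inj
      funext u
      have h3 := congrFun h2 ((Equiv.ofBijective _ (hInd G)) u)
      have h4 := congrArg Subtype.val h3
      simp only at h4
      rw [← h1] at h4
      simpa only [Equiv.symm_apply_apply] using h4
    have A : 2 ^ (k + 1).choose 2 ≤ (k + 1)! * ∏ i, m i := h_lower.trans hcard2
    have B : (k + 1) ^ (k + 1) * ∏ i, m i ≤ 2 ^ (L * (k + 1)) := by
      calc (k + 1) ^ (k + 1) * ∏ i, m i ≤ (∑ i, m i) ^ (k + 1) := nat_amgm (k + 1) m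
        _ = (2 ^ L) ^ (k + 1) := by rw [hsum]
        _ = 2 ^ (L * (k + 1)) := by rw [← pow_mul]
    have h2C' : 2 * (k + 1).choose 2 = (k + 1) * k := by simpa using h2C
    have hLn : L * (k + 1) ≤ (k + 1).choose 2 + (k + 1) := by
      have h1' : 2 * (L * (k + 1)) ≤ (k + 2) * (k + 1) := by
        calc 2 * (L * (k + 1)) = (2 * L) * (k + 1) := by ring
          _ ≤ (k + 2) * (k + 1) := Nat.mul_le_mul_right _ (by omega)
      have h2' : (k + 1) * k + 2 * (k + 1) = (k + 2) * (k + 1) := by ring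
      linarith
    have hchain : (k + 1) ^ (k + 1) * 2 ^ (k + 1).choose 2
        ≤ (2 ^ (k + 1) * (k + 1)!) * 2 ^ (k + 1).choose 2 := by
      calc (k + 1) ^ (k + 1) * 2 ^ (k + 1).choose 2
          ≤ (k + 1) ^ (k + 1) * ((k + 1)! * ∏ i, m i) := Nat.mul_le_mul_left _ A
        _ = (k + 1)! * ((k + 1) ^ (k + 1) * ∏ i, m i) := by ring
        _ ≤ (k + 1)! * 2 ^ (L * (k + 1)) := Nat.mul_le_mul_left _ B
        _ ≤ (k + 1)! * 2 ^ ((k + 1).choose 2 + (k + 1)) :=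
            Nat.mul_le_mul_left _ (Nat.pow_le_pow_right (by norm_num) hLn)
        _ = (2 ^ (k + 1) * (k + 1)!) * 2 ^ (k + 1).choose 2 := by rw [pow_add]; ring
    have hfin : (k + 1) ^ (k + 1) ≤ 2 ^ (k + 1) * (k + 1)! :=
      Nat.le_of_mul_le_mul_right hchain (by positivity)
    exact absurd hfin (not_le.2 (two_pow_mul_factorial_lt (k + 1) (by omega)))
end
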